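/- arXiv:1205.5402 — 7 statements merged into one kernel-verified Lean document; each statement's English description precedes it below -/
import Mathlib

section
/- For real b, c with d = b^2 - 4c > 0, T_n(b,c) = d^(n/2) * L_n(b/\sqrt{d}), where L_n is the n-th Legendre polynomial. -/
open Filter Polynomial Real Finset

noncomputable def T (n : ℕ) (b c : ℝ) : ℝ :=
  ((X ^ 2 + C b * X + C c) ^ n).coeff n

noncomputable def legendre (n : ℕ) : Polynomial ℝ :=
  (1 / (2 ^ n * (n.factorial : ℝ))) • (Polynomial.derivative^[n] ((X ^ 2 - 1) ^ n))

theorem stmt_3 (b c : ℝ) (hd : b ^ 2 - 4 * c > 0) (n : ℕ) :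
    T n b c = (b ^ 2 - 4 * c) ^ ((n : ℝ) / 2) *
      (legendre n).eval (b / Real.sqrt (b ^ 2 - 4 * c)) := by
  set t := Real.sqrt (b ^ 2 - 4 * c) with htdef
  have ht : 0 < t := Real.sqrt_pos.mpr hd
  have ht2 : t ^ 2 = b ^ 2 - 4 * c := Real.sq_sqrt hd.le
  have ht0 : t ≠ 0 := ne_of_gt ht
  set r : ℝ := (b + t) / 2 with hrdef
  set s : ℝ := (b - t) / 2 with hsdef
  have hrs : r + s = b := by rw [hrdef, hsdef]; ring
  have hmul : r * s = c := by rw [hrdef, hsdef]; linear_combination (-1/4 : ℝ) * ht2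
  -- rpow simplification
  have hpow : (b ^ 2 - 4 * c) ^ ((n : ℝ) / 2) = t ^ n := by
    rw [htdef, Real.sqrt_eq_rpow, ← Real.rpow_natCast ((b^2-4*c) ^ ((1:ℝ)/2)) n,
      ← Real.rpow_mul hd.le]
    congr 1
    ring
  -- factor the quadratic
  have hfac : (X ^ 2 + C b * X + C c : ℝ[X]) = (X + C r) * (X + C s) := by
    rw [← hrs, ← hmul, C_add, C_mul]; ring
  -- LHS as a sum
  have hL : T n b c = ∑ k ∈ range (n + 1),
      (r ^ (n - k) * (n.choose k : ℝ)) * (s ^ k * (n.choose k : ℝ)) := by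
    rw [T, hfac, mul_pow, coeff_mul, Finset.Nat.sum_antidiagonal_eq_sum_range_succ_mk]
    refine Finset.sum_congr rfl fun k hk => ?_
    have hk' : k ≤ n := Nat.lt_succ_iff.mp (mem_range.mp hk)
    rw [coeff_X_add_C_pow, coeff_X_add_C_pow, Nat.choose_symm hk',
      show n - (n - k) = k by omega]
  -- the iterated derivative
  have h1 : ((X : ℝ[X]) ^ 2 - 1) ^ n = (X - C 1) ^ n * (X + C 1) ^ n := by
    rw [← mul_pow]; congr 1; rw [C_1]; ring
  have h2 : derivative^[n] (((X : ℝ[X]) ^ 2 - 1) ^ n) = ∑ k ∈ range (n + 1),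
      n.choose k • ((n.descFactorial (n - k) • (X - C 1) ^ k) *
        (n.descFactorial k • (X + C 1) ^ (n - k))) := by
    rw [h1, iterate_derivative_mul]
    refine Finset.sum_congr rfl fun k hk => ?_
    have hk' : k ≤ n := Nat.lt_succ_iff.mp (mem_range.mp hk)
    rw [iterate_derivative_X_sub_pow, iterate_derivative_X_add_pow,
      show n - (n - k) = k by omega]
  set x := b / t with hxdef
  have hR : (legendre n).eval x = (1 / (2 ^ n * (n.factorial : ℝ))) *
      ∑ k ∈ range (n + 1), (n.choose k : ℝ) * (((n.descFactorial (n - k) : ℝ) * (x - 1) ^ k) *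
        ((n.descFactorial k : ℝ) * (x + 1) ^ (n - k))) := by
    rw [legendre, h2]
    simp [eval_finset_sum]
  rw [hL, hpow, hR, Finset.mul_sum, Finset.mul_sum]
  refine Finset.sum_congr rfl fun k hk => ?_
  have hk' : k ≤ n := Nat.lt_succ_iff.mp (mem_range.mp hk)
  have hx1 : x - 1 = 2 * s / t := by rw [hxdef, hsdef]; field_simp
  have hx2 : x + 1 = 2 * r / t := by rw [hxdef, hrdef]; field_simp
  have hd1 : (n.descFactorial (n - k) : ℝ) = ((n - k).factorial : ℝ) * (n.choose k : ℝ) := by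
    rw_mod_cast [Nat.descFactorial_eq_factorial_mul_choose, Nat.choose_symm hk']
  have hd2 : (n.descFactorial k : ℝ) = (k.factorial : ℝ) * (n.choose k : ℝ) := by
    exact_mod_cast congrArg Nat.cast (Nat.descFactorial_eq_factorial_mul_choose n k)
  set m := n - k with hmdef
  have hnm : n = k + m := by omega
  have hCk : (n.choose k : ℝ) * (k.factorial : ℝ) * (m.factorial : ℝ) = (n.factorial : ℝ) := by
    exact_mod_cast Nat.choose_mul_factorial_mul_factorial hk'
  have hfn : (n.factorial : ℝ) ≠ 0 := Nat.cast_ne_zero.mpr n.factorial_ne_zero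
  have hCk' : ((k + m).choose k : ℝ) * (k.factorial : ℝ) * (m.factorial : ℝ)
      = ((k + m).factorial : ℝ) := by
    have := Nat.choose_mul_factorial_mul_factorial (Nat.le_add_right k m)
    rw [Nat.add_sub_cancel_left] at this
    exact_mod_cast this
  have h2s : 2 * s / t = (b - t) / t := by rw [hsdef]; ring
  have h2r : 2 * r / t = (b + t) / t := by rw [hrdef]; ring
  rw [hx1, hx2, hd1, hd2, hnm, h2s, h2r, hrdef, hsdef]
  simp only [div_pow]
  rw [pow_add t, pow_add (2:ℝ)]
  field_simp
  linear_combination (-1 * ((k + m).choose k : ℝ) ^ 2 *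
    (b - t) ^ k * (b + t) ^ m) * hCk'
end

section
/- The ordinary generating function of the sequence T_n(b,c) satisfies \sum_{n\ge 0} T_n(b,c) t^n = (1 - 2bt + (b^2-4c) t^2)^{-1/2} for all real b, c and all real t in a neighbourhood of 0 (with |t| small enough that 1 - 2bt + (b^2-4c)t^2 > 0). -/
open Filter Polynomial Real

namespace Stmt4Aux

noncomputable def a (n : ℕ) : ℝ := (Nat.centralBinom n : ℝ) / 4 ^ n

lemma choose_le_two_pow (n k : ℕ) : n.choose k ≤ 2 ^ n := by
  rcases le_or_gt k n with h | h
  · calc n.choose k ≤ ∑ i ∈ Finset.range (n+1), n.choose i :=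
        Finset.single_le_sum (fun i _ => Nat.zero_le _) (Finset.mem_range.2 (by omega))
      _ = 2 ^ n := Nat.sum_range_choose n
  · simp [Nat.choose_eq_zero_of_lt h]

lemma a_nonneg (n : ℕ) : 0 ≤ a n := by unfold a; positivity

lemma a_le_one (n : ℕ) : a n ≤ 1 := by
  unfold a
  rw [div_le_one (by positivity)]
  have h : Nat.centralBinom n ≤ 4 ^ n := by
    have h2 := choose_le_two_pow (2 * n) n
    calc Nat.centralBinom n = (2*n).choose n := rfl
      _ ≤ 2 ^ (2*n) := h2
      _ = 4 ^ n := by rw [pow_mul]; norm_num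
  exact_mod_cast h

lemma a_rec (n : ℕ) : ((n : ℝ) + 1) * a (n+1) = ((n : ℝ) + 1/2) * a n := by
  have h := Nat.succ_mul_centralBinom_succ n
  have hR : ((n : ℝ) + 1) * (Nat.centralBinom (n+1) : ℝ)
      = 2 * (2 * n + 1) * (Nat.centralBinom n : ℝ) := by exact_mod_cast h
  unfold a
  rw [pow_succ, mul_div_assoc', mul_div_assoc', div_eq_div_iff (by positivity) (by positivity)]
  linear_combination (4 : ℝ) ^ n * hR

lemma summable_term {x : ℝ} (hx : |x| < 1/2) : Summable fun n => a n * x ^ n := by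
  apply Summable.of_norm_bounded (g := fun n => |x| ^ n)
    (summable_geometric_of_lt_one (abs_nonneg x) (by linarith))
  intro n
  rw [norm_mul, norm_pow, Real.norm_eq_abs, Real.norm_eq_abs, abs_of_nonneg (a_nonneg n)]
  calc a n * |x| ^ n ≤ 1 * |x| ^ n := by gcongr; exact a_le_one n
    _ = |x| ^ n := one_mul _


noncomputable def S (x : ℝ) : ℝ := ∑' n, a n * x ^ n

lemma hasSum_S {x : ℝ} (hx : |x| < 1/2) : HasSum (fun n => a n * x ^ n) (S x) :=
  (summable_term hx).hasSum

lemma u_eq (n : ℕ) : (n : ℝ) * (1/2) ^ (n - 1) = 2 * ((n : ℝ) * (1/2) ^ n) := by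
  cases n with
  | zero => simp
  | succ m => rw [Nat.add_sub_cancel]; push_cast; rw [pow_succ]; ring

lemma summable_u : Summable (fun n : ℕ => (n : ℝ) * (1/2) ^ (n - 1)) := by
  have h := (summable_pow_mul_geometric_of_norm_lt_one (R := ℝ) 1
    (r := 1/2) (by norm_num)).mul_left 2
  apply h.congr
  intro n
  rw [pow_one, ← u_eq]

lemma deriv_bound {n : ℕ} {y : ℝ} (hy : |y| < 1/2) :
    ‖a n * ((n : ℝ) * y ^ (n - 1))‖ ≤ (n : ℝ) * (1/2) ^ (n - 1) := by
  simp only [norm_mul, norm_pow, Real.norm_eq_abs, Nat.abs_cast, abs_of_nonneg (a_nonneg n)]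
  calc a n * ((n : ℝ) * |y| ^ (n-1)) ≤ 1 * ((n : ℝ) * (1/2) ^ (n-1)) := by
        apply mul_le_mul (a_le_one n) ?_ (by positivity) zero_le_one
        exact mul_le_mul_of_nonneg_left
          (pow_le_pow_left₀ (abs_nonneg y) hy.le _) (Nat.cast_nonneg n)
    _ = (n : ℝ) * (1/2) ^ (n-1) := one_mul _

lemma summable_deriv_term {x : ℝ} (hx : |x| < 1/2) :
    Summable (fun n => a n * ((n : ℝ) * x ^ (n - 1))) :=
  Summable.of_norm_bounded summable_u fun n => deriv_bound hx

lemma S_hasDerivAt {x : ℝ} (hx : |x| < 1/2) :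
    HasDerivAt S (S x / (2 * (1 - x))) x := by
  have hmem : ∀ y : ℝ, y ∈ Set.Ioo (-(1/2) : ℝ) (1/2) → |y| < 1/2 := by
    intro y hy; rw [abs_lt]; exact ⟨hy.1, hy.2⟩
  have hxmem : x ∈ Set.Ioo (-(1/2) : ℝ) (1/2) := by
    rw [abs_lt] at hx; exact ⟨hx.1, hx.2⟩
  have h0mem : (0 : ℝ) ∈ Set.Ioo (-(1/2) : ℝ) (1/2) := by constructor <;> norm_num
  have h0sum : Summable (fun n => a n * (0 : ℝ) ^ n) :=
    summable_term (by rw [abs_zero]; norm_num)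
  have hd : HasDerivAt (fun z => ∑' n, a n * z ^ n)
      (∑' n, a n * ((n : ℝ) * x ^ (n - 1))) x :=
    hasDerivAt_tsum_of_isPreconnected summable_u isOpen_Ioo
      (convex_Ioo _ _).isPreconnected
      (fun n y _ => (hasDerivAt_pow n y).const_mul (a n))
      (fun n y hy => deriv_bound (hmem y hy)) h0mem h0sum hxmem
  set D := ∑' n, a n * ((n : ℝ) * x ^ (n - 1)) with hDdef
  have hsumD : HasSum (fun n => a n * ((n : ℝ) * x ^ (n - 1))) D :=
    (summable_deriv_term hx).hasSum
  have hshift : HasSum (fun n : ℕ => ((n : ℝ) + 1) * a (n+1) * x ^ n) D := by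
    have h := (hasSum_nat_add_iff' (f := fun n => a n * ((n : ℝ) * x ^ (n - 1))) 1).2 hsumD
    simp only [Finset.range_one, Finset.sum_singleton, Nat.cast_zero, zero_mul, mul_zero,
      sub_zero] at h
    convert h using 1
    · rfl
    funext n
    rw [Nat.add_sub_cancel]
    push_cast
    ring
  have hrec : (fun n : ℕ => ((n : ℝ) + 1) * a (n+1) * x ^ n)
      = fun n : ℕ => ((n : ℝ) + 1/2) * a n * x ^ n := by
    funext n; rw [a_rec]
  rw [hrec] at hshift
  have hxD : HasSum (fun n : ℕ => (n : ℝ) * a n * x ^ n) (x * D) := by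
    have h := hsumD.mul_left x
    have heq : (fun n : ℕ => x * (a n * ((n : ℝ) * x ^ (n - 1))))
        = fun n : ℕ => (n : ℝ) * a n * x ^ n := by
      funext n
      cases n with
      | zero => simp
      | succ m => rw [Nat.add_sub_cancel]; push_cast; rw [pow_succ]; ring
    rwa [heq] at h
  have hhalf : HasSum (fun n : ℕ => (1/2 : ℝ) * (a n * x ^ n)) ((1/2) * S x) :=
    (hasSum_S hx).mul_left _
  have hcomb : HasSum (fun n : ℕ => ((n : ℝ) + 1/2) * a n * x ^ n) (x * D + 1/2 * S x) := by
    have h := hxD.add hhalf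
    have heq : (fun n : ℕ => (n : ℝ) * a n * x ^ n + (1/2 : ℝ) * (a n * x ^ n))
        = fun n : ℕ => ((n : ℝ) + 1/2) * a n * x ^ n := by
      funext n; ring
    rwa [heq] at h
  have hDeq : D = x * D + 1/2 * S x := hshift.unique hcomb
  have hx1 : (1 : ℝ) - x ≠ 0 := by
    rw [abs_lt] at hx; intro h; nlinarith
  have hDval : D = S x / (2 * (1 - x)) := by
    rw [eq_div_iff (by intro h; apply hx1; nlinarith [sq_nonneg ((1:ℝ)-x)] )]
    nlinarith [hDeq]
  rw [← hDval]
  exact hd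

lemma S_zero : S 0 = 1 := by
  unfold S
  rw [tsum_eq_single 0 (by intro n hn; simp [zero_pow hn])]
  simp [a, Nat.centralBinom]

lemma S_eq {x : ℝ} (hx : |x| < 1/2) : S x = (Real.sqrt (1 - x))⁻¹ := by
  set F : ℝ → ℝ := fun y => Real.sqrt (1 - y) * S y with hF
  have hderiv : ∀ y : ℝ, |y| < 1/2 → HasDerivAt F 0 y := by
    intro y hy
    have h1y : (0 : ℝ) < 1 - y := by rw [abs_lt] at hy; linarith
    have hsq : HasDerivAt (fun z : ℝ => Real.sqrt (1 - z)) (1 / (2 * Real.sqrt (1 - y)) * (-1)) y := by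
      have h1 : HasDerivAt (fun z : ℝ => 1 - z) (-1) y := (hasDerivAt_id y).const_sub 1
      exact (Real.hasDerivAt_sqrt h1y.ne').comp y h1
    have hS := S_hasDerivAt hy
    have h := hsq.mul hS
    have hr : Real.sqrt (1 - y) > 0 := Real.sqrt_pos.2 h1y
    have hr2 : Real.sqrt (1 - y) ^ 2 = 1 - y := Real.sq_sqrt h1y.le
    have hval : 1 / (2 * Real.sqrt (1 - y)) * (-1) * S y
        + Real.sqrt (1 - y) * (S y / (2 * (1 - y))) = 0 := by
      field_simp
      linear_combination S y * hr2
    rwa [hval] at h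
  have hconst : F x = F 0 := by
    rcases eq_or_ne x 0 with rfl | hx0
    · rfl
    have hsub : Set.Icc (min x 0) (max x 0) ⊆ Set.Ioo (-(1/2) : ℝ) (1/2) := by
      intro y hy
      rw [abs_lt] at hx
      rcases hy with ⟨h1, h2⟩
      constructor
      · rcases le_or_gt x 0 with h | h
        · calc -(1/2 : ℝ) < x := hx.1
            _ = min x 0 := (min_eq_left h).symm
            _ ≤ y := h1
        · calc -(1/2 : ℝ) < 0 := by norm_num
            _ = min x 0 := (min_eq_right h.le).symm
            _ ≤ y := h1
      · rcases le_or_gt x 0 with h | h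
        · calc y ≤ max x 0 := h2
            _ = 0 := max_eq_right h
            _ < 1/2 := by norm_num
        · calc y ≤ max x 0 := h2
            _ = x := max_eq_left h.le
            _ < 1/2 := hx.2
    have habs : ∀ y ∈ Set.Icc (min x 0) (max x 0), |y| < 1/2 := by
      intro y hy
      have := hsub hy
      rw [abs_lt]; exact ⟨this.1, this.2⟩
    have hcont : ContinuousOn F (Set.Icc (min x 0) (max x 0)) :=
      fun y hy => ((hderiv y (habs y hy)).continuousAt).continuousWithinAt
    have hder : ∀ y ∈ Set.Ico (min x 0) (max x 0), HasDerivWithinAt F 0 (Set.Ici y) y :=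
      fun y hy => (hderiv y (habs y (Set.Ico_subset_Icc_self hy))).hasDerivWithinAt
    have key := constant_of_has_deriv_right_zero hcont hder
    have h1 := key x ⟨min_le_left _ _, le_max_left _ _⟩
    have h2 := key 0 ⟨min_le_right _ _, le_max_right _ _⟩
    rw [h1, h2]
  have hF0 : F 0 = 1 := by
    simp [hF, S_zero]
  have hFx : Real.sqrt (1 - x) * S x = 1 := by
    exact hconst.trans hF0
  have hr : (0 : ℝ) < Real.sqrt (1 - x) := by
    apply Real.sqrt_pos.2; rw [abs_lt] at hx; linarith
  exact mul_left_cancel₀ hr.ne' (by rw [hFx, mul_inv_cancel₀ hr.ne'])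

lemma binom_hasSum {x : ℝ} (hx : |x| < 1/2) :
    HasSum (fun n => a n * x ^ n) ((Real.sqrt (1 - x))⁻¹) :=
  S_eq hx ▸ hasSum_S hx


lemma nat_key (i j : ℕ) :
    Nat.centralBinom (i + j) * (i + j).choose j
      = (2 * (i + j)).choose (i + 2 * j) * (i + 2 * j).choose j := by
  rw [Nat.centralBinom, Nat.choose_mul (by omega),
    Nat.choose_mul (by omega)]
  congr 1
  have h1 : 2 * (i + j) - j = 2 * i + j := by omega
  have h2 : (i + j) - j = i := by omega
  have h3 : (i + 2 * j) - j = i + j := by omega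
  rw [h1, h2, h3]
  rw [← Nat.choose_symm (by omega : i + j ≤ 2 * i + j)]
  congr 1
  omega

lemma term_eq (b c t : ℝ) (i j : ℕ) :
    a (i + j) * ((i + j).choose j : ℝ) * (2*b*t) ^ i * (-(b^2-4*c)*t^2) ^ j
      = (b/2) ^ (2*(i+j) - (i+2*j)) * ((2*(i+j)).choose (i+2*j) : ℝ)
        * (c - (b/2)^2) ^ ((i+2*j) - (i+j)) * ((i+2*j).choose (i+j) : ℝ) * t ^ (i+2*j) := by
  have n3 : 2*(i+j) - (i+2*j) = i := by omega
  have n4 : i + 2*j - (i+j) = j := by omega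
  have n5 : (i+2*j).choose (i+j) = (i+2*j).choose j := by
    rw [show i + j = i + 2*j - j by omega, Nat.choose_symm (by omega)]
  rw [n3, n4, n5]
  have hkeyR : (Nat.centralBinom (i+j) : ℝ) * ((i+j).choose j : ℝ)
      = ((2*(i+j)).choose (i+2*j) : ℝ) * ((i+2*j).choose j : ℝ) := by
    exact_mod_cast nat_key i j
  have hpows : (2*b*t:ℝ)^i * (-(b^2-4*c)*t^2)^j / 4^(i+j)
      = (b/2)^i * (c-(b/2)^2)^j * t^(i+2*j) := by
    have h4 : (-(b^2-4*c)*t^2 : ℝ) = 4 * ((c - (b/2)^2) * t^2) := by ring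
    have h2 : (2*b*t : ℝ) = 4 * ((b/2) * t) := by ring
    rw [h4, h2, mul_pow, mul_pow, mul_pow, mul_pow, pow_add (4:ℝ), pow_add t, pow_mul t]
    have h40 : (4:ℝ)^i ≠ 0 := by positivity
    have h40' : (4:ℝ)^j ≠ 0 := by positivity
    field_simp
  calc a (i+j) * ((i+j).choose j : ℝ) * (2*b*t)^i * (-(b^2-4*c)*t^2)^j
      = ((Nat.centralBinom (i+j) : ℝ) * ((i+j).choose j : ℝ))
          * ((2*b*t:ℝ)^i * (-(b^2-4*c)*t^2)^j / 4^(i+j)) := by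
        rw [a]; ring
    _ = (((2*(i+j)).choose (i+2*j) : ℝ) * ((i+2*j).choose j : ℝ))
          * ((b/2)^i * (c-(b/2)^2)^j * t^(i+2*j)) := by rw [hkeyR, hpows]
    _ = (b/2)^i * ((2*(i+j)).choose (i+2*j) : ℝ) * (c-(b/2)^2)^j
          * ((i+2*j).choose j : ℝ) * t^(i+2*j) := by ring

def e1 : (Σ n : ℕ, Fin (n+1)) ≃ ℕ × ℕ where
  toFun p := (p.1 - p.2, p.2)
  invFun q := ⟨q.1 + q.2, ⟨q.2, by omega⟩⟩
  left_inv p := by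
    obtain ⟨n, j, hj⟩ := p
    refine Sigma.ext ?_ ?_ <;> dsimp only
    · omega
    · rw [Fin.heq_ext_iff (by omega)]
  right_inv q := by
    obtain ⟨i, j⟩ := q
    simp

def e2 : (Σ m : ℕ, Fin (m/2+1)) ≃ ℕ × ℕ where
  toFun p := (p.1 - 2 * p.2, p.2)
  invFun q := ⟨q.1 + 2 * q.2, ⟨q.2, by omega⟩⟩
  left_inv p := by
    obtain ⟨m, j, hj⟩ := p
    refine Sigma.ext ?_ ?_ <;> dsimp only
    · omega
    · rw [Fin.heq_ext_iff (by omega)]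
  right_inv q := by
    obtain ⟨i, j⟩ := q
    have h : i + 2 * j - 2 * j = i := by omega
    simp [h]

end Stmt4Aux

namespace Stmt4Aux

lemma T_eq (m : ℕ) (b c : ℝ) :
    T m b c = ∑ k ∈ Finset.range (m+1),
      (b/2) ^ (2*k - m) * ((2*k).choose m : ℝ) * (c - (b/2)^2) ^ (m - k) * (m.choose k : ℝ) := by
  have hb : (C b : ℝ[X]) = C (b/2) + C (b/2) := by rw [← C_add]; norm_num
  have hc : (C c : ℝ[X]) = C (c - (b/2)^2) + C (b/2) * C (b/2) := by
    rw [← C_mul, ← C_add]; congr 1; ring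
  have hP : (X ^ 2 + C b * X + C c : ℝ[X]) = (X + C (b/2)) ^ 2 + C (c - (b/2)^2) := by
    rw [hb, hc]; ring
  rw [T, hP, add_pow, Polynomial.finset_sum_coeff]
  refine Finset.sum_congr rfl fun k hk => ?_
  rw [← pow_mul, ← C_pow, ← Polynomial.C_eq_natCast, mul_assoc, ← C_mul, coeff_mul_C,
    coeff_X_add_C_pow]
  ring

end Stmt4Aux

open Stmt4Aux

theorem stmt_4 (b c : ℝ) :
    ∃ ε > (0 : ℝ), ∀ t : ℝ, |t| < ε →
      0 < 1 - 2 * b * t + (b ^ 2 - 4 * c) * t ^ 2 ∧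
      HasSum (fun n : ℕ => T n b c * t ^ n)
        ((Real.sqrt (1 - 2 * b * t + (b ^ 2 - 4 * c) * t ^ 2))⁻¹) := by
  set u : ℝ := b ^ 2 - 4 * c with hu
  refine ⟨min ((8*(|b|+1))⁻¹) (min 1 ((8*(|u|+1))⁻¹)), by positivity, fun t ht => ?_⟩
  have htb : |t| < (8*(|b|+1))⁻¹ := lt_of_lt_of_le ht (min_le_left _ _)
  have ht1 : |t| < 1 := lt_of_lt_of_le ht ((min_le_right _ _).trans (min_le_left _ _))
  have htu : |t| < (8*(|u|+1))⁻¹ := lt_of_lt_of_le ht ((min_le_right _ _).trans (min_le_right _ _))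
  have hbpos : (0:ℝ) < 8*(|b|+1) := by positivity
  have hupos : (0:ℝ) < 8*(|u|+1) := by positivity
  have htb' : |t| * (8*(|b|+1)) < 1 := by
    rw [← lt_div_iff₀ hbpos] ; rwa [div_eq_inv_mul, mul_one] at *
  have htu' : |t| * (8*(|u|+1)) < 1 := by
    rw [← lt_div_iff₀ hupos] ; rwa [div_eq_inv_mul, mul_one] at *
  have hb1 : |2*b*t| < 1/4 := by
    rw [abs_mul, abs_mul, abs_two]
    nlinarith [abs_nonneg t, abs_nonneg b]
  have hu1 : |u*t^2| < 1/8 := by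
    rw [abs_mul, abs_pow, sq_abs]
    nlinarith [abs_nonneg t, abs_nonneg u, sq_abs t, sq_nonneg (|t|)]
  obtain ⟨hb1l, hb1r⟩ := abs_lt.mp hb1
  obtain ⟨hu1l, hu1r⟩ := abs_lt.mp hu1
  have hpos : 0 < 1 - 2 * b * t + u * t ^ 2 := by nlinarith
  refine ⟨hpos, ?_⟩
  set z : ℝ := 2*b*t - u*t^2 with hz
  have hzlt : |z| < 1/2 := by
    rw [abs_lt]
    constructor <;> nlinarith
  have hbs : HasSum (fun n => a n * z ^ n) ((Real.sqrt (1 - z))⁻¹) := binom_hasSum hzlt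
  have h1z : (1 : ℝ) - z = 1 - 2 * b * t + u * t ^ 2 := by rw [hz]; ring
  rw [h1z] at hbs
  set F : ℕ × ℕ → ℝ := fun p =>
    a (p.1 + p.2) * ((p.1 + p.2).choose p.2 : ℝ) * (2*b*t) ^ p.1 * (-u*t^2) ^ p.2 with hF
  -- summability of F
  have hFsum : Summable F := by
    apply Summable.of_norm_bounded
      (g := fun p : ℕ × ℕ => (2*|2*b*t|) ^ p.1 * (2*|u*t^2|) ^ p.2)
    · apply Summable.mul_of_nonneg
      · exact summable_geometric_of_lt_one (by positivity) (by linarith)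
      · exact summable_geometric_of_lt_one (by positivity) (by linarith)
      · intro i; positivity
      · intro j; positivity
    · rintro ⟨i, j⟩
      have hch : ((i+j).choose j : ℝ) ≤ 2 ^ (i+j) := by
        exact_mod_cast choose_le_two_pow (i+j) j
      have h1 : ‖F (i, j)‖ = a (i+j) * ((i+j).choose j : ℝ) * |2*b*t| ^ i * |u*t^2| ^ j := by
        rw [hF, Real.norm_eq_abs]
        dsimp only
        rw [abs_mul, abs_mul, abs_mul, abs_pow, abs_pow,
          abs_of_nonneg (a_nonneg _), Nat.abs_cast,
          show |(-u * t^2)| = |u * t^2| by rw [abs_mul, abs_neg, ← abs_mul]]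
      rw [h1]
      calc a (i+j) * ((i+j).choose j : ℝ) * |2*b*t| ^ i * |u*t^2| ^ j
          ≤ 1 * (2 ^ (i+j)) * |2*b*t| ^ i * |u*t^2| ^ j := by
            apply mul_le_mul_of_nonneg_right _ (by positivity)
            apply mul_le_mul_of_nonneg_right _ (by positivity)
            exact mul_le_mul (a_le_one _) hch (by positivity) zero_le_one
        _ = (2*|2*b*t|) ^ i * (2*|u*t^2|) ^ j := by
            rw [pow_add]
            rw [mul_pow, mul_pow]
            ring
  -- fiberwise sums over e1
  have fiber1 : ∀ n : ℕ, HasSum (fun j : Fin (n+1) => (F ∘ e1) ⟨n, j⟩) (a n * z ^ n) := by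
    intro n
    have key : ∑ j ∈ Finset.range (n+1), F (n - j, j) = a n * z ^ n := by
      rw [show z = (-u*t^2) + 2*b*t by rw [hz]; ring, add_pow, Finset.mul_sum]
      refine Finset.sum_congr rfl fun j hj => ?_
      have hj' : j ≤ n := Nat.lt_succ_iff.mp (Finset.mem_range.mp hj)
      have hnj : n - j + j = n := by omega
      rw [hF]
      dsimp only
      rw [hnj]
      ring
    have h0 := hasSum_fintype (fun j : Fin (n+1) => F (n - (j:ℕ), (j:ℕ)))
    rwa [Fin.sum_univ_eq_sum_range (fun j => F (n - j, j)) (n+1), key] at h0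
  have hGsummable : Summable (F ∘ e1) := e1.summable_iff.2 hFsum
  have hG : HasSum (F ∘ e1) ((Real.sqrt (1 - 2*b*t + u*t^2))⁻¹) :=
    HasSum.sigma_of_hasSum hbs fiber1 hGsummable
  have hFhs : HasSum F ((Real.sqrt (1 - 2*b*t + u*t^2))⁻¹) := e1.hasSum_iff.1 hG
  have hH : HasSum (F ∘ e2) ((Real.sqrt (1 - 2*b*t + u*t^2))⁻¹) := e2.hasSum_iff.2 hFhs
  -- fiberwise over e2 : value T m b c * t^m
  have fiber2 : ∀ m : ℕ, HasSum (fun j : Fin (m/2+1) => (F ∘ e2) ⟨m, j⟩) (T m b c * t ^ m) := by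
    intro m
    have key : ∑ j ∈ Finset.range (m/2+1), F (m - 2*j, j) = T m b c * t ^ m := by
      rw [T_eq, Finset.sum_mul]
      conv_rhs => rw [← Finset.sum_range_reflect]
      have hsubset : Finset.range (m/2+1) ⊆ Finset.range (m+1) :=
        Finset.range_subset_range.2 (by omega)
      rw [← Finset.sum_subset hsubset ?vanish]
      case vanish =>
        intro j hjm hj2
        have hj1 : j ≤ m := Nat.lt_succ_iff.mp (Finset.mem_range.mp hjm)
        have hj2' : m/2 < j := by
          by_contra hcon
          exact hj2 (Finset.mem_range.mpr (by omega))
        have hlt : 2 * (m + 1 - 1 - j) < m := by omega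
        rw [Nat.choose_eq_zero_of_lt hlt]
        push_cast
        ring
      refine Finset.sum_congr rfl fun j hjr => ?_
      have hj2 : 2 * j ≤ m := by
        have := Nat.lt_succ_iff.mp (Finset.mem_range.mp hjr)
        omega
      obtain ⟨i, rfl⟩ : ∃ i, m = i + 2 * j := ⟨m - 2*j, by omega⟩
      rw [hF]
      dsimp only
      have n1 : i + 2*j - 2*j = i := by omega
      have n2 : i + 2*j + 1 - 1 - j = i + j := by omega
      rw [n1, n2, hu]
      exact term_eq b c t i j
    have h0 := hasSum_fintype (fun j : Fin (m/2+1) => F (m - 2*(j:ℕ), (j:ℕ)))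
    rwa [Fin.sum_univ_eq_sum_range (fun j => F (m - 2*j, j)) (m/2+1), key] at h0
  have final := hH.sigma fiber2
  exact final
end

section
/- As a formal power series over the rationals (with b, c rational parameters), the square of \sum_{n\ge 0} T_n(b,c) t^n times (1 - 2bt + (b^2-4c)t^2) equals 1. -/
open Polynomial

noncomputable def Tq (n : ℕ) (b c : ℚ) : ℚ :=
  ((X ^ 2 + Polynomial.C b * X + Polynomial.C c) ^ n).coeff n

namespace StmtFiveAux

noncomputable def P (b c : ℚ) : ℚ[X] := X ^ 2 + Polynomial.C b * X + Polynomial.C c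

lemma coeff_P_mul (b c : ℚ) (g : ℚ[X]) (k : ℕ) :
    (P b c * g).coeff (k+2) = g.coeff k + b * g.coeff (k+1) + c * g.coeff (k+2) := by
  simp [P, add_mul, coeff_X_pow_mul, coeff_C_mul, mul_assoc, coeff_X_mul]

lemma pow_succ_coeff (b c : ℚ) (m k : ℕ) :
    ((P b c) ^ (m+1)).coeff (k+2)
      = ((P b c)^m).coeff k + b * ((P b c)^m).coeff (k+1) + c * ((P b c)^m).coeff (k+2) := by
  rw [pow_succ', coeff_P_mul]

lemma deriv_P (b c : ℚ) : derivative (P b c) = Polynomial.C 2 * X + Polynomial.C b := by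
  simp [P]
  rw [← C_1, ← C_add]
  norm_num

lemma key (b c : ℚ) (m k : ℕ) :
    ((k:ℚ)+1) * ((P b c)^(m+1)).coeff (k+1) + b*((k:ℚ)+2)*((P b c)^(m+1)).coeff (k+2)
      + c*((k:ℚ)+3)*((P b c)^(m+1)).coeff (k+3)
    = ((m:ℚ)+1) * (2 * ((P b c)^(m+1)).coeff (k+1) + b * ((P b c)^(m+1)).coeff (k+2)) := by
  have hid : P b c * derivative ((P b c)^(m+1))
      = Polynomial.C ((m:ℚ)+1) * ((Polynomial.C 2 * X + Polynomial.C b) * (P b c)^(m+1)) := by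
    rw [derivative_pow, deriv_P]
    push_cast
    ring
  have h := congrArg (fun p : ℚ[X] => p.coeff (k+2)) hid
  simp only [coeff_P_mul, coeff_derivative, coeff_C_mul, add_mul, coeff_add, mul_assoc,
    coeff_X_mul] at h
  push_cast at h
  linear_combination h

lemma Tq_zero (b c : ℚ) : Tq 0 b c = 1 := by simp [Tq]

lemma Tq_one (b c : ℚ) : Tq 1 b c = b := by
  simp [Tq, coeff_X_pow, coeff_C]

lemma Tq_two (b c : ℚ) : Tq 2 b c = b^2 + 2*c := by
  have h : (X ^ 2 + Polynomial.C b * X + Polynomial.C c:ℚ[X]) ^ 2 =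
      X^4 + C (2*b) * X^3 + C (b^2+2*c) * X^2 + C (2*b*c) * X + C (c^2) := by
    simp only [C_mul, C_add, C_pow, map_ofNat]
    ring
  rw [Tq, h]
  simp only [coeff_add, coeff_C_mul, coeff_X_pow, coeff_X, coeff_C]
  norm_num

lemma Tq_three (b c : ℚ) : Tq 3 b c = b^3 + 6*b*c := by
  have h : (X ^ 2 + Polynomial.C b * X + Polynomial.C c:ℚ[X]) ^ 3 =
      X^6 + C (3*b) * X^5 + C (3*b^2+3*c) * X^4 + C (b^3+6*b*c) * X^3
      + C (3*b^2*c+3*c^2) * X^2 + C (3*b*c^2) * X + C (c^3) := by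
    simp only [C_mul, C_add, C_pow, map_ofNat]
    ring
  rw [Tq, h]
  simp only [coeff_add, coeff_C_mul, coeff_X_pow, coeff_X, coeff_C]
  norm_num

lemma Tq_four (b c : ℚ) : Tq 4 b c = b^4 + 12*b^2*c + 6*c^2 := by
  have h : (X ^ 2 + Polynomial.C b * X + Polynomial.C c:ℚ[X]) ^ 4 =
      X^8 + C (4*b) * X^7 + C (6*b^2+4*c) * X^6 + C (4*b^3+12*b*c) * X^5
      + C (b^4+12*b^2*c+6*c^2) * X^4 + C (4*b^3*c+12*b*c^2) * X^3
      + C (6*b^2*c^2+4*c^3) * X^2 + C (4*b*c^3) * X + C (c^4) := by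
    simp only [C_mul, C_add, C_pow, map_ofNat]
    ring
  rw [Tq, h]
  simp only [coeff_add, coeff_C_mul, coeff_X_pow, coeff_X, coeff_C]
  norm_num

lemma Tq_eq (b c : ℚ) (n : ℕ) : Tq n b c = ((P b c)^n).coeff n := rfl

lemma Tq_rec (b c : ℚ) (n : ℕ) :
    ((n:ℚ)+2) * Tq (n+2) b c
      = (2*(n:ℚ)+3)*b*Tq (n+1) b c - ((n:ℚ)+1)*(b^2-4*c)*Tq n b c := by
  match n with
  | 0 => norm_num [Tq_two, Tq_one, Tq_zero]; ring
  | 1 => norm_num [Tq_three, Tq_two, Tq_one]; ring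
  | 2 => norm_num [Tq_four, Tq_three, Tq_two]; ring
  | (m+3) =>
    have key1 := key b c (m+3) (m+2)
    have key2 := key b c (m+2) (m+1)
    have key3 := key b c (m+2) m
    have e1 := pow_succ_coeff b c (m+4) (m+3)
    have e2 := pow_succ_coeff b c (m+3) (m+2)
    have e3 := pow_succ_coeff b c (m+3) (m+1)
    push_cast at key1 key2 key3
    have h5 : ((m:ℚ)+5) ≠ 0 := by positivity
    have h4 : ((m:ℚ)+4) ≠ 0 := by positivity
    have h1 : c * ((P b c)^(m+4)).coeff (m+5) = ((P b c)^(m+4)).coeff (m+3) :=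
      mul_left_cancel₀ h5 (by push_cast; linear_combination key1)
    have h2 : c * ((P b c)^(m+3)).coeff (m+4) = ((P b c)^(m+3)).coeff (m+2) :=
      mul_left_cancel₀ h4 (by push_cast; linear_combination key2)
    have h3 : c*((m:ℚ)+3)*((P b c)^(m+3)).coeff (m+3)
        = ((m:ℚ)+5)*((P b c)^(m+3)).coeff (m+1) + b*((P b c)^(m+3)).coeff (m+2) := by
      push_cast; linear_combination key3
    have E1 : Tq (m+5) b c = 2*((P b c)^(m+4)).coeff (m+3) + b*Tq (m+4) b c := by
      rw [Tq_eq, Tq_eq]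
      have : (m+5:ℕ) = (m+3)+2 := by ring
      rw [this] at e1 ⊢
      linear_combination e1 + h1
    have E2 : Tq (m+4) b c = 2*((P b c)^(m+3)).coeff (m+2) + b*Tq (m+3) b c := by
      rw [Tq_eq, Tq_eq]
      have : (m+4:ℕ) = (m+2)+2 := by ring
      rw [this] at e2 ⊢
      linear_combination e2 + h2
    have E3 : ((m:ℚ)+5)*((P b c)^(m+4)).coeff (m+3)
        = ((m:ℚ)+4)*(b*((P b c)^(m+3)).coeff (m+2) + 2*c*Tq (m+3) b c) := by
      rw [Tq_eq]
      linear_combination ((m:ℚ)+5)*e3 - h3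
    push_cast
    linear_combination ((m:ℚ)+5)*E1 + 2*E3 - ((m:ℚ)+4)*b*E2

lemma coeff_zero_X_mul' (g : PowerSeries ℚ) : PowerSeries.coeff 0 (PowerSeries.X * g) = 0 := by
  rw [PowerSeries.coeff_zero_eq_constantCoeff_apply, map_mul, PowerSeries.constantCoeff_X,
    zero_mul]

lemma ode (b c : ℚ) :
    (1 - PowerSeries.C (2 * b) * PowerSeries.X +
        PowerSeries.C (b ^ 2 - 4 * c) * PowerSeries.X ^ 2) *
      (PowerSeries.derivative ℚ (PowerSeries.mk fun n => Tq n b c))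
    = (PowerSeries.C b - PowerSeries.C (b ^ 2 - 4 * c) * PowerSeries.X) *
        (PowerSeries.mk fun n => Tq n b c) := by
  generalize hd : b ^ 2 - 4 * c = d
  set f := PowerSeries.mk fun n => Tq n b c with hf
  set g := PowerSeries.derivative ℚ f with hg
  have hcg : ∀ k, PowerSeries.coeff k g = ((k:ℚ)+1) * Tq (k+1) b c := by
    intro k
    rw [hg, PowerSeries.coeff_derivative, hf, PowerSeries.coeff_mk]
    ring
  have hq : (1 - PowerSeries.C (2 * b) * PowerSeries.X +
      PowerSeries.C d * PowerSeries.X ^ 2) * g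
      = g - PowerSeries.C (2 * b) * (PowerSeries.X * g)
        + PowerSeries.C d * (PowerSeries.X * (PowerSeries.X * g)) := by
    ring
  have hr : (PowerSeries.C b - PowerSeries.C d * PowerSeries.X) * f
      = PowerSeries.C b * f - PowerSeries.C d * (PowerSeries.X * f) := by
    ring
  rw [hq, hr]
  ext n
  rw [map_add, map_sub, map_sub, PowerSeries.coeff_C_mul, PowerSeries.coeff_C_mul,
    PowerSeries.coeff_C_mul, PowerSeries.coeff_C_mul]
  match n with
  | 0 =>
    rw [coeff_zero_X_mul', coeff_zero_X_mul', hcg 0,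
      PowerSeries.coeff_zero_eq_constantCoeff_apply, hf]
    simp [Tq_zero, Tq_one]
  | 1 =>
    rw [show (1:ℕ) = 0+1 from rfl, PowerSeries.coeff_succ_X_mul, PowerSeries.coeff_succ_X_mul,
      coeff_zero_X_mul', hcg 1, hcg 0, hf, PowerSeries.coeff_succ_X_mul,
      PowerSeries.coeff_mk, PowerSeries.coeff_mk]
    have h := Tq_rec b c 0
    rw [hd] at h
    push_cast at h ⊢
    linear_combination h
  | (n+2) =>
    rw [show (n+2:ℕ) = (n+1)+1 from rfl, PowerSeries.coeff_succ_X_mul,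
      PowerSeries.coeff_succ_X_mul, show (n+1:ℕ) = n+1 from rfl,
      PowerSeries.coeff_succ_X_mul, hcg (n+1+1), hcg (n+1), hcg n, hf,
      PowerSeries.coeff_succ_X_mul, PowerSeries.coeff_mk, PowerSeries.coeff_mk]
    have h := Tq_rec b c (n+1)
    rw [hd] at h
    push_cast at h ⊢
    linear_combination h

end StmtFiveAux

theorem stmt_5 (b c : ℚ) :
    (PowerSeries.mk fun n => Tq n b c) ^ 2 *
      (1 - PowerSeries.C (2 * b) * PowerSeries.X +
        PowerSeries.C (b ^ 2 - 4 * c) * PowerSeries.X ^ 2) = 1 := by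
  open PowerSeries StmtFiveAux in
  set f := PowerSeries.mk fun n => Tq n b c with hf
  set q := (1 - PowerSeries.C (2 * b) * PowerSeries.X +
      PowerSeries.C (b ^ 2 - 4 * c) * PowerSeries.X ^ 2) with hq
  have hdq : d⁄dX ℚ q = 2 * PowerSeries.C (b ^ 2 - 4 * c) * PowerSeries.X
      - PowerSeries.C (2 * b) := by
    rw [hq]
    simp only [map_add, map_sub, Derivation.leibniz, PowerSeries.derivative_X, PowerSeries.derivative_C, pow_two]
    simp [smul_eq_mul]
    ring
  have hd : d⁄dX ℚ (f ^ 2 * q) = 0 := by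
    have expand : d⁄dX ℚ (f ^ 2 * q) = f * (f * (d⁄dX ℚ q)) + 2 * f * (q * (d⁄dX ℚ f)) := by
      simp only [Derivation.leibniz, smul_eq_mul, pow_two]
      ring
    rw [expand, ode b c, hdq, ← hf]
    have h2b : PowerSeries.C (2*b) = 2 * PowerSeries.C b := by
      rw [map_mul, map_ofNat]
    rw [h2b]
    ring
  have hcc : PowerSeries.constantCoeff (f ^ 2 * q) = 1 := by
    rw [hf, hq]
    simp [map_mul, map_pow, Tq_zero]
  refine PowerSeries.derivative.ext (R := ℚ) ?_ ?_
  · rw [hd]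
    simp
  · rw [hcc]
    simp
end

section
/- For b > 0 and c > 0, the limit of T_n(b,c)^{1/n} as n \to \infty equals b + 2\sqrt{c}. -/
open Filter Polynomial Real Finset

lemma coeff_nonneg' (b c : ℝ) (hb : 0 ≤ b) (hc : 0 ≤ c) (n k : ℕ) :
    0 ≤ ((X ^ 2 + C b * X + C c) ^ n).coeff k := by
  have hp : ∀ j, 0 ≤ (X ^ 2 + C b * X + C c).coeff j := by
    intro j
    simp only [coeff_add, coeff_X_pow, coeff_C_mul, coeff_X, coeff_C]
    split_ifs <;> simp <;> positivity
  induction n generalizing k with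
  | zero => simp [coeff_one]; split_ifs <;> norm_num
  | succ n ih =>
    rw [pow_succ, coeff_mul]
    exact Finset.sum_nonneg fun p _ => mul_nonneg (ih p.1) (hp p.2)

lemma qnonneg' (c : ℝ) (hc : 0 ≤ c) (k j : ℕ) :
    0 ≤ ((X ^ 2 + C c) ^ k : ℝ[X]).coeff j := by
  have := coeff_nonneg' 0 c le_rfl hc k j
  simpa using this

lemma coeff_le_eval' (p : ℝ[X]) (hp : ∀ j, 0 ≤ p.coeff j) (x : ℝ) (hx : 0 ≤ x) (k : ℕ) :
    p.coeff k * x ^ k ≤ p.eval x := by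
  rw [Polynomial.eval_eq_sum_range' (show p.natDegree < (max p.natDegree k).succ from
    Nat.lt_succ_of_le (Nat.le_max_left _ _))]
  exact Finset.single_le_sum (fun j _ => mul_nonneg (hp j) (pow_nonneg hx j))
    (Finset.mem_range.2 (Nat.lt_succ_of_le (Nat.le_max_right _ _)))

lemma Texpand (b c : ℝ) (n : ℕ) :
    T n b c = ∑ k ∈ range (n + 1),
      ((X ^ 2 + C c) ^ k).coeff k * b ^ (n - k) * (n.choose k) := by
  have h : (X ^ 2 + C b * X + C c : ℝ[X]) = (X ^ 2 + C c) + C b * X := by ring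
  rw [T, h, add_pow, finset_sum_coeff]
  refine Finset.sum_congr rfl fun k hk => ?_
  have hk' : k ≤ n := Nat.lt_succ_iff.mp (Finset.mem_range.mp hk)
  have : ((X ^ 2 + C c : ℝ[X]) ^ k * (C b * X) ^ (n - k) * (n.choose k : ℝ[X])) =
      C (b ^ (n - k) * (n.choose k)) * ((X ^ 2 + C c) ^ k * X ^ (n - k)) := by
    simp only [mul_pow, ← C_pow, C_mul, Polynomial.C_eq_natCast]
    ring
  rw [this, coeff_C_mul, coeff_mul_X_pow', if_pos (Nat.sub_le n k)]
  have : n - (n - k) = k := Nat.sub_sub_self hk'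
  rw [this]
  ring

lemma qval (c : ℝ) (m : ℕ) :
    ((X ^ 2 + C c) ^ (2 * m) : ℝ[X]).coeff (2 * m) = c ^ m * ((2 * m).choose m) := by
  rw [add_pow, finset_sum_coeff]
  rw [Finset.sum_eq_single m]
  · have : ((X ^ 2 : ℝ[X]) ^ m * C c ^ (2 * m - m) * ((2 * m).choose m : ℝ[X])) =
        C (c ^ (2 * m - m) * ((2 * m).choose m)) * X ^ (2 * m) := by
      simp only [← C_pow, C_mul, Polynomial.C_eq_natCast, ← pow_mul]
      ring
    rw [this, coeff_C_mul, coeff_X_pow, if_pos rfl, mul_one]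
    congr 2
    omega
  · intro j hj hjm
    have : ((X ^ 2 : ℝ[X]) ^ j * C c ^ (2 * m - j) * ((2 * m).choose j : ℝ[X])) =
        C (c ^ (2 * m - j) * ((2 * m).choose j)) * X ^ (2 * j) := by
      simp only [← C_pow, C_mul, Polynomial.C_eq_natCast, ← pow_mul]
      ring
    rw [this, coeff_C_mul, coeff_X_pow, if_neg (by omega), mul_zero]
  · intro h
    exact absurd (Finset.mem_range.2 (by omega)) h

lemma Tlower (b c : ℝ) (hb : 0 < b) (hc : 0 < c) (n : ℕ) :
    ((b + 2 * Real.sqrt c) ^ n + (b - 2 * Real.sqrt c) ^ n) / (2 * (n + 1)) ≤ T n b c := by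
  set x := 2 * Real.sqrt c with hx
  have hx0 : 0 ≤ x := by positivity
  have hs : (b + x) ^ n = ∑ k ∈ range (n + 1), x ^ k * b ^ (n - k) * (n.choose k) := by
    rw [add_comm b x, add_pow]
  have ht : (b - x) ^ n = ∑ k ∈ range (n + 1), (-x) ^ k * b ^ (n - k) * (n.choose k) := by
    rw [show b - x = -x + b by ring, add_pow]
  rw [Texpand, hs, ht, ← Finset.sum_add_distrib, Finset.sum_div]
  refine Finset.sum_le_sum fun k hk => ?_
  have hkn : k ≤ n := Nat.lt_succ_iff.mp (Finset.mem_range.mp hk)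
  rcases Nat.even_or_odd k with ⟨m, hm⟩ | hodd
  · -- k = 2m
    have hk2 : k = 2 * m := by omega
    subst hk2
    rw [qval]
    have hxx : x ^ (2 * m) = 4 ^ m * c ^ m := by
      rw [pow_mul, hx]
      rw [mul_pow, Real.sq_sqrt hc.le]
      norm_num
      ring
    have hneg : (-x) ^ (2 * m) = x ^ (2 * m) :=
      Even.neg_pow ⟨m, by omega⟩ x
    rw [hneg, hxx]
    have h4 : (4 : ℝ) ^ m ≤ (n + 1) * ((2 * m).choose m) := by
      have := Nat.four_pow_le_two_mul_add_one_mul_central_binom m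
      have h1 : (4 : ℝ) ^ m ≤ (2 * m + 1) * ((2 * m).choose m) := by
        exact_mod_cast this
      refine h1.trans ?_
      have : (2 * m + 1 : ℝ) ≤ n + 1 := by
        have : 2 * m ≤ n := hkn
        exact_mod_cast by omega
      exact mul_le_mul_of_nonneg_right this (Nat.cast_nonneg _)
    rw [div_le_iff₀ (by positivity)]
    have hbn : (0:ℝ) ≤ b ^ (n - 2 * m) := by positivity
    have hch : (0:ℝ) ≤ (n.choose (2 * m) : ℝ) := Nat.cast_nonneg _
    have hcm : (0:ℝ) ≤ c ^ m := by positivity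
    nlinarith [mul_nonneg (mul_nonneg hbn hch) hcm,
      mul_le_mul_of_nonneg_left h4 (mul_nonneg (mul_nonneg hbn hch) hcm)]
  · -- odd
    have hneg : (-x) ^ k = -(x ^ k) := hodd.neg_pow x
    rw [hneg]
    have : x ^ k * b ^ (n - k) * ↑(n.choose k) + -x ^ k * b ^ (n - k) * ↑(n.choose k) = 0 := by
      ring
    rw [this, zero_div]
    exact mul_nonneg (mul_nonneg (qnonneg' c hc.le k k) (by positivity)) (Nat.cast_nonneg _)

lemma Tupper (b c : ℝ) (hb : 0 < b) (hc : 0 < c) (n : ℕ) :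
    T n b c ≤ (b + 2 * Real.sqrt c) ^ n := by
  have hsc : (0:ℝ) < Real.sqrt c := Real.sqrt_pos.mpr hc
  have key := coeff_le_eval' ((X ^ 2 + C b * X + C c) ^ n)
    (coeff_nonneg' b c hb.le hc.le n) (Real.sqrt c) hsc.le n
  have heval : ((X ^ 2 + C b * X + C c) ^ n).eval (Real.sqrt c)
      = ((b + 2 * Real.sqrt c) * Real.sqrt c) ^ n := by
    rw [eval_pow]
    congr 1
    simp only [eval_add, eval_mul, eval_pow, eval_X, eval_C]
    rw [Real.sq_sqrt hc.le]
    nlinarith [Real.sq_sqrt hc.le]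
  rw [heval, mul_pow] at key
  have : T n b c * Real.sqrt c ^ n ≤ (b + 2 * Real.sqrt c) ^ n * Real.sqrt c ^ n := key
  exact le_of_mul_le_mul_right this (by positivity)

theorem stmt_8 (b c : ℝ) (hb : 0 < b) (hc : 0 < c) :
    Tendsto (fun n : ℕ => (T n b c) ^ ((1 : ℝ) / n)) atTop
      (nhds (b + 2 * Real.sqrt c)) := by
  set s := b + 2 * Real.sqrt c with hsdef
  have hsc : (0:ℝ) < Real.sqrt c := Real.sqrt_pos.mpr hc
  have hs0 : 0 < s := by positivity
  set r := |b - 2 * Real.sqrt c| / s with hrdef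
  have hr0 : 0 ≤ r := by positivity
  have hr1 : r < 1 := by
    rw [hrdef, div_lt_one hs0, abs_lt]
    constructor <;> [linarith; linarith]
  -- the lower sequence
  set a : ℕ → ℝ := fun n => (1 - r) / (2 * (n + 1)) with hadef
  have ha_pos : ∀ n : ℕ, 0 < a n := fun n => by
    have : (0:ℝ) < 1 - r := by linarith
    positivity
  -- key bounds for n ≥ 1
  have hTlow : ∀ n : ℕ, 1 ≤ n → a n * s ^ n ≤ T n b c := by
    intro n hn
    refine le_trans ?_ (Tlower b c hb hc n)
    rw [hadef]
    have hst : (b - 2 * Real.sqrt c) ^ n ≥ -(r * s ^ n) := by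
      have h1 : (b - 2 * Real.sqrt c) ^ n ≥ -(|b - 2 * Real.sqrt c| ^ n) := by
        have := abs_pow (b - 2 * Real.sqrt c) n
        have h2 := neg_abs_le ((b - 2 * Real.sqrt c) ^ n)
        rw [this] at h2
        linarith
      have h3 : |b - 2 * Real.sqrt c| ^ n ≤ r * s ^ n := by
        have habs : |b - 2 * Real.sqrt c| = r * s := by
          rw [hrdef]; field_simp
        rw [habs, mul_pow]
        have hrn : r ^ n ≤ r := by
          calc r ^ n ≤ r ^ 1 := pow_le_pow_of_le_one hr0 hr1.le hn
          _ = r := pow_one r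
        have : (0:ℝ) ≤ s ^ n := by positivity
        nlinarith
      linarith
    rw [div_mul_eq_mul_div, div_le_div_iff₀ (by positivity) (by positivity)]
    have hsn : (0:ℝ) ≤ s ^ n := by positivity
    nlinarith
  have hTup : ∀ n : ℕ, T n b c ≤ s ^ n := fun n => Tupper b c hb hc n
  have hT0 : ∀ n : ℕ, 0 ≤ T n b c := fun n => coeff_nonneg' b c hb.le hc.le n n
  -- lower sequence tends to s
  have h_a_rpow : Tendsto (fun n : ℕ => (a n) ^ ((1:ℝ)/n)) atTop (nhds 1) := by
    have hlog : Tendsto (fun n : ℕ => Real.log (a n) * ((1:ℝ)/n)) atTop (nhds 0) := by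
      have hloga : ∀ n : ℕ, Real.log (a n) = Real.log (1 - r) - Real.log (2 * (n + 1)) := by
        intro n
        rw [hadef, Real.log_div (by linarith) (by positivity)]
      have h1 : Tendsto (fun n : ℕ => Real.log (1 - r) / n) atTop (nhds 0) :=
        tendsto_const_div_atTop_nhds_zero_nat _
      have h2 : Tendsto (fun n : ℕ => Real.log (2 * (n + 1)) / n) atTop (nhds 0) := by
        have hd : Tendsto (fun x : ℝ => Real.log x / x) atTop (nhds 0) :=
          Real.isLittleO_log_id_atTop.tendsto_div_nhds_zero
        have hcomp : Tendsto (fun n : ℕ => (2 * ((n:ℝ) + 1))) atTop atTop := by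
          have h0 : Tendsto (fun n : ℕ => ((n:ℝ) + 1)) atTop atTop :=
            tendsto_atTop_add_const_right atTop 1 tendsto_natCast_atTop_atTop
          exact h0.const_mul_atTop two_pos
        have hA : Tendsto (fun n : ℕ => Real.log (2 * ((n:ℝ) + 1)) / (2 * ((n:ℝ) + 1)))
            atTop (nhds 0) := hd.comp hcomp
        have hB : Tendsto (fun n : ℕ => 2 * ((n:ℝ) + 1) / n) atTop (nhds 2) := by
          have hB0 : Tendsto (fun n : ℕ => 2 + 2 / (n:ℝ)) atTop (nhds (2 + 0)) :=
            tendsto_const_nhds.add (tendsto_const_div_atTop_nhds_zero_nat 2)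
          rw [add_zero] at hB0
          refine hB0.congr' ?_
          filter_upwards [eventually_ge_atTop 1] with n hn
          have hn0 : (n:ℝ) ≠ 0 := Nat.cast_ne_zero.mpr (by omega)
          field_simp
        have hAB := hA.mul hB
        rw [zero_mul] at hAB
        refine hAB.congr' ?_
        filter_upwards with n
        have h2n : (2 * ((n:ℝ) + 1)) ≠ 0 := by positivity
        field_simp
      have h3 := h1.sub h2
      rw [sub_zero] at h3
      refine h3.congr (fun n => ?_)
      rw [hloga n]
      ring
    have : Tendsto (fun n : ℕ => Real.exp (Real.log (a n) * ((1:ℝ)/n))) atTop (nhds (Real.exp 0)) :=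
      (Real.continuous_exp.tendsto 0).comp hlog
    rw [Real.exp_zero] at this
    refine this.congr (fun n => ?_)
    rw [Real.rpow_def_of_pos (ha_pos n)]
  have hlow_tendsto : Tendsto (fun n : ℕ => (a n) ^ ((1:ℝ)/n) * s) atTop (nhds s) := by
    have := h_a_rpow.mul_const s
    rwa [one_mul] at this
  -- squeeze
  refine tendsto_of_tendsto_of_tendsto_of_le_of_le' hlow_tendsto tendsto_const_nhds ?_ ?_
  · filter_upwards [eventually_ge_atTop 1] with n hn
    have hn0 : (n:ℝ) ≠ 0 := Nat.cast_ne_zero.mpr (by omega)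
    have h1 : ((a n * s ^ n) : ℝ) ^ ((1:ℝ)/n) ≤ (T n b c) ^ ((1:ℝ)/n) := by
      apply Real.rpow_le_rpow (mul_nonneg (ha_pos n).le (by positivity)) (hTlow n hn) (by positivity)
    have h2 : ((a n * s ^ n) : ℝ) ^ ((1:ℝ)/n) = (a n) ^ ((1:ℝ)/n) * s := by
      rw [Real.mul_rpow (ha_pos n).le (by positivity)]
      congr 1
      rw [← Real.rpow_natCast s n, ← Real.rpow_mul hs0.le]
      rw [show (n:ℝ) * ((1:ℝ)/n) = 1 by field_simp]
      exact Real.rpow_one s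
    rw [← h2]
    exact h1
  · filter_upwards [eventually_ge_atTop 1] with n hn
    have hn0 : (n:ℝ) ≠ 0 := Nat.cast_ne_zero.mpr (by omega)
    calc (T n b c) ^ ((1:ℝ)/n) ≤ (s ^ n) ^ ((1:ℝ)/n) :=
          Real.rpow_le_rpow (hT0 n) (hTup n) (by positivity)
      _ = s := by
          rw [← Real.rpow_natCast s n, ← Real.rpow_mul hs0.le,
            show (n:ℝ) * ((1:ℝ)/n) = 1 by field_simp, Real.rpow_one]
end

section
/- For b > 0 and c > 0, as n \to \infty, T_n(b,c) is asymptotically equivalent to (b+2\sqrt{c})^{n+1/2} / (2 c^{1/4} \sqrt{\pi n}); i.e. the ratio tends to 1. -/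
open Filter Polynomial Real MeasureTheory intervalIntegral Finset

lemma T_eq_integral (b c : ℝ) (hc : 0 < c) (n : ℕ) :
    T n b c = (∫ θ in (0:ℝ)..(2*π), (b + 2 * Real.sqrt c * Real.cos θ) ^ n) / (2*π) := by
  set s := Real.sqrt c with hsdef
  have hs : 0 < s := Real.sqrt_pos.2 hc
  have hs2 : (s:ℂ)^2 = (c:ℂ) := by norm_cast; exact Real.sq_sqrt hc.le
  set P : ℂ[X] := (X ^ 2 + C (b:ℂ) * X + C (c:ℂ)) with hP
  have hdeg : (P ^ n).natDegree < 2 * n + 1 := by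
    have h2 : P.natDegree ≤ 2 := by
      have := Polynomial.natDegree_quadratic_le (a := (1:ℂ)) (b := (b:ℂ)) (c := (c:ℂ))
      rw [hP]; simpa using this
    calc (P^n).natDegree ≤ n * P.natDegree := Polynomial.natDegree_pow_le
      _ ≤ n * 2 := Nat.mul_le_mul_left n h2
      _ < 2*n+1 := by omega
  set a : ℕ → ℂ := fun k => (P ^ n).coeff k with ha
  set F : ℕ → ℝ → ℂ := fun k θ =>
    a k * (s:ℂ)^((k:ℤ)-(n:ℤ)) * Complex.exp (((((k:ℤ)-(n:ℤ)):ℂ) * Complex.I) * θ) with hF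
  have key : ∀ θ : ℝ, ((b + 2 * s * Real.cos θ : ℝ) : ℂ)^n
      = ∑ k ∈ Finset.range (2*n+1), F k θ := by
    intro θ
    set e : ℂ := Complex.exp (θ * Complex.I) with he
    have he0 : e ≠ 0 := Complex.exp_ne_zero _
    set z : ℂ := (s:ℂ) * e with hz
    have hz0 : z ≠ 0 := mul_ne_zero (by exact_mod_cast hs.ne') he0
    have hcos : e + e⁻¹ = 2 * ((Real.cos θ : ℝ):ℂ) := by
      rw [he, ← Complex.exp_neg, Complex.ofReal_cos, ← neg_mul, Complex.exp_mul_I,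
        Complex.exp_mul_I, Complex.cos_neg, Complex.sin_neg]
      ring
    have claim1 : ((b + 2 * s * Real.cos θ : ℝ) : ℂ) * z = Polynomial.eval z P := by
      have h1 : ((b + 2 * s * Real.cos θ : ℝ):ℂ) = b + (s:ℂ) * (e + e⁻¹) := by
        rw [hcos]; push_cast; ring
      rw [h1, hP]
      simp only [Polynomial.eval_add, Polynomial.eval_mul, Polynomial.eval_pow,
        Polynomial.eval_X, Polynomial.eval_C]
      rw [hz, ← hs2]
      field_simp
      ring
    have claim2 : ((b + 2 * s * Real.cos θ : ℝ) : ℂ)^n * z^n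
        = ∑ k ∈ Finset.range (2*n+1), a k * z^k := by
      rw [← mul_pow, claim1, ← Polynomial.eval_pow]
      exact Polynomial.eval_eq_sum_range' hdeg z
    have hmain : ((b + 2 * s * Real.cos θ : ℝ) : ℂ)^n
        = ∑ k ∈ Finset.range (2*n+1), a k * z^((k:ℤ)-(n:ℤ)) := by
      have : ∑ k ∈ Finset.range (2*n+1), a k * z^((k:ℤ)-(n:ℤ))
          = (∑ k ∈ Finset.range (2*n+1), a k * z^k) * (z^n)⁻¹ := by
        rw [Finset.sum_mul]
        refine Finset.sum_congr rfl fun k hk => ?_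
        rw [mul_assoc, sub_eq_add_neg, zpow_add₀ hz0, zpow_natCast, zpow_neg, zpow_natCast]
      rw [this, ← claim2, mul_inv_cancel_right₀ (pow_ne_zero _ hz0)]
    rw [hmain]
    refine Finset.sum_congr rfl fun k hk => ?_
    rw [hF]
    simp only []
    rw [hz, mul_zpow, mul_assoc]
    congr 1
    rw [he, ← Complex.exp_int_mul]
    congr 1
    push_cast
    ring
  have hTa : (T n b c : ℂ) = a n := by
    have hmap : P = (X ^ 2 + C b * X + C c : ℝ[X]).map Complex.ofRealHom := by
      simp [hP, Polynomial.map_add, Polynomial.map_pow, Polynomial.map_mul]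
    rw [ha, T]
    simp only [hmap, ← Polynomial.map_pow, Polynomial.coeff_map]
    rfl
  have hconts : ∀ k, Continuous (F k) := by
    intro k
    rw [hF]
    fun_prop
  have hint : ∀ k ∈ Finset.range (2*n+1), (∫ θ in (0:ℝ)..(2*π), F k θ)
      = if k = n then (2*π) * a n else 0 := by
    intro k hk
    rw [hF]
    simp only []
    rw [intervalIntegral.integral_const_mul]
    by_cases hkn : k = n
    · subst hkn
      simp [Complex.ofReal_mul]
      ring
    · have hkZ : (((k:ℤ):ℂ) - ((n:ℤ):ℂ)) ≠ 0 := by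
        rw [sub_ne_zero]
        exact_mod_cast hkn
      have hc' : ((((k:ℤ)-(n:ℤ)):ℂ) * Complex.I) ≠ 0 := by
        push_cast
        exact mul_ne_zero hkZ Complex.I_ne_zero
      rw [if_neg hkn, integral_exp_mul_complex hc']
      have h1 : Complex.exp ((((k:ℤ)-(n:ℤ)):ℂ) * Complex.I * (2*π)) = 1 := by
        have := Complex.exp_int_mul_two_pi_mul_I ((k:ℤ)-(n:ℤ))
        rw [← this]
        congr 1
        push_cast
        ring
      push_cast at h1 ⊢
      rw [h1]
      simp
  have hsum : (∫ θ in (0:ℝ)..(2*π), ((b + 2 * s * Real.cos θ : ℝ) : ℂ)^n)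
      = (2*π) * a n := by
    have : (∫ θ in (0:ℝ)..(2*π), ((b + 2 * s * Real.cos θ : ℝ) : ℂ)^n)
        = ∫ θ in (0:ℝ)..(2*π), ∑ k ∈ Finset.range (2*n+1), F k θ := by
      congr 1; ext θ; exact key θ
    rw [this, intervalIntegral.integral_finset_sum
      (fun k _ => ((hconts k).intervalIntegrable _ _)),
      Finset.sum_congr rfl hint, Finset.sum_ite_eq' _ n]
    simp [Nat.lt_succ_iff]
    omega
  have hre : ((∫ θ in (0:ℝ)..(2*π), (b + 2 * s * Real.cos θ)^n : ℝ) : ℂ)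
      = (∫ θ in (0:ℝ)..(2*π), ((b + 2 * s * Real.cos θ : ℝ) : ℂ)^n) := by
    rw [← intervalIntegral.integral_ofReal]
    congr 1; ext θ; push_cast; ring
  have hπ : (2*π) ≠ 0 := by positivity
  have : ((∫ θ in (0:ℝ)..(2*π), (b + 2 * s * Real.cos θ)^n : ℝ) : ℂ) = (2*π) * (T n b c : ℂ) := by
    rw [hre, hsum, hTa]
  have h2 : (∫ θ in (0:ℝ)..(2*π), (b + 2 * s * Real.cos θ)^n : ℝ) = (2*π) * T n b c := by
    exact_mod_cast this
  rw [h2]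
  field_simp

lemma tendsto_sin_div : Tendsto (fun t : ℝ => Real.sin t / t) (nhdsWithin 0 {0}ᶜ) (nhds 1) := by
  have h := hasDerivAt_iff_tendsto_slope.mp (Real.hasDerivAt_sin 0)
  rw [Real.cos_zero] at h
  refine h.congr fun t => ?_
  simp [slope_def_field]

lemma tendsto_one_sub_cos_div_sq :
    Tendsto (fun t : ℝ => (1 - Real.cos t) / t^2) (nhdsWithin 0 {0}ᶜ) (nhds (1/2)) := by
  have hhalf : Tendsto (fun t : ℝ => t/2) (nhdsWithin 0 {0}ᶜ) (nhdsWithin 0 {0}ᶜ) := by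
    rw [tendsto_nhdsWithin_iff]
    constructor
    · exact Tendsto.mono_left (by simpa using (continuous_id.div_const 2).tendsto (0:ℝ)) nhdsWithin_le_nhds
    · filter_upwards [self_mem_nhdsWithin] with t ht
      simp only [Set.mem_compl_iff, Set.mem_singleton_iff] at ht ⊢
      intro h; exact ht (by linarith)
  have h1 : Tendsto (fun t : ℝ => (Real.sin (t/2) / (t/2))^2 / 2) (nhdsWithin 0 {0}ᶜ) (nhds (1/2)) := by
    have := ((tendsto_sin_div.comp hhalf).pow 2).div_const 2
    simpa using this
  refine h1.congr' ?_
  filter_upwards [self_mem_nhdsWithin] with t ht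
  simp only [Set.mem_compl_iff, Set.mem_singleton_iff] at ht
  have hsin : 1 - Real.cos t = 2 * Real.sin (t/2)^2 := by
    have h2 := Real.cos_sq (t/2)
    rw [show 2*(t/2) = t by ring] at h2
    nlinarith [Real.sin_sq_add_cos_sq (t/2)]
  rw [hsin]
  field_simp

lemma tendsto_log_one_sub_div :
    Tendsto (fun x : ℝ => Real.log (1 - x) / x) (nhdsWithin 0 {0}ᶜ) (nhds (-1)) := by
  have h : HasDerivAt (fun x : ℝ => Real.log (1 - x)) (-1) 0 := by
    have h1 : HasDerivAt (fun x : ℝ => 1 - x) (-1) 0 := by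
      simpa using (hasDerivAt_id (0:ℝ)).const_sub 1
    have := (Real.hasDerivAt_log (by norm_num : (1:ℝ) - 0 ≠ 0)).comp 0 h1
    simp at this; exact this
  have h2 := hasDerivAt_iff_tendsto_slope.mp h
  refine h2.congr fun t => ?_
  simp [slope_def_field]

noncomputable def phiAux : ℝ → ℝ := fun x => if x = 0 then (-1) else Real.log (1 - x) / x

lemma tendsto_phiAux : Tendsto phiAux (nhds 0) (nhds (-1)) := by
  rw [← nhdsNE_sup_pure (0:ℝ)]
  rw [tendsto_sup]
  constructor
  · refine tendsto_log_one_sub_div.congr' ?_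
    filter_upwards [self_mem_nhdsWithin] with t ht
    simp only [Set.mem_compl_iff, Set.mem_singleton_iff] at ht
    simp [phiAux, ht]
  · simpa [phiAux] using tendsto_pure_nhds phiAux 0

noncomputable def K (b s : ℝ) : ℝ := 2 * min b (2*s) / ((b + 2*s) * π^2)

lemma K_pos {b s : ℝ} (hb : 0 < b) (hs : 0 < s) : 0 < K b s := by
  have := Real.pi_pos
  have : 0 < min b (2*s) := lt_min hb (by positivity)
  rw [K]; positivity

lemma K_eq {b s : ℝ} (hb : 0 < b) (hs : 0 < s) :
    (b + 2*s) * (K b s * π^2) = 2 * min b (2*s) := by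
  have := Real.pi_pos
  rw [K]; field_simp

lemma K_pi_le {b s : ℝ} (hb : 0 < b) (hs : 0 < s) : K b s * π^2 ≤ 1 := by
  have hπ := Real.pi_pos
  have hmb : min b (2*s) ≤ b := min_le_left _ _
  have hms : min b (2*s) ≤ 2*s := min_le_right _ _
  have hM : (0:ℝ) < b + 2*s := by positivity
  have h := K_eq hb hs
  have : (b+2*s) * (K b s * π^2) ≤ (b+2*s) * 1 := by rw [h]; linarith
  exact (mul_le_mul_iff_right₀ hM).mp this

lemma f_bound {b s : ℝ} (hb : 0 < b) (hs : 0 < s) {θ : ℝ} (h0 : 0 ≤ θ) (hπθ : θ ≤ π) :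
    |b + 2*s*Real.cos θ| ≤ (b + 2*s) * Real.exp (-(K b s) * θ^2) := by
  have hπ := Real.pi_pos
  have hA : (0:ℝ) < b + 2*s := by positivity
  have hmb : min b (2*s) ≤ b := min_le_left _ _
  have hms : min b (2*s) ≤ 2*s := min_le_right _ _
  have hmpos : 0 < min b (2*s) := lt_min hb (by positivity)
  have hk := K_pos hb hs
  have hsin : 1 - Real.cos θ = 2 * Real.sin (θ/2)^2 := by
    have h2 := Real.cos_sq (θ/2)
    rw [show 2*(θ/2) = θ by ring] at h2
    nlinarith [Real.sin_sq_add_cos_sq (θ/2)]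
  have hnn : (0:ℝ) ≤ 2/π*(θ/2) := by positivity
  have hsin2 : 2/π * (θ/2) ≤ Real.sin (θ/2) :=
    Real.mul_le_sin (by linarith) (by linarith)
  have hsq : (2/π*(θ/2))^2 ≤ Real.sin (θ/2)^2 := pow_le_pow_left₀ hnn hsin2 2
  have h5 : (2/π*(θ/2))^2 * π^2 = θ^2 := by field_simp
  have hsq2 : (2/π*(θ/2))^2 * π^2 ≤ Real.sin (θ/2)^2 * π^2 :=
    mul_le_mul_of_nonneg_right hsq (by positivity)
  have hcosub : 2*(θ^2/π^2) ≤ 1 - Real.cos θ := by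
    rw [hsin, mul_div_assoc' 2 _ (π^2), div_le_iff₀ (by positivity)]
    nlinarith
  have hθπ : θ^2 ≤ π^2 := by nlinarith
  have hkθ : (b+2*s) * (K b s * θ^2) = 2 * min b (2*s) * (θ^2/π^2) := by
    rw [K]; field_simp
  have hratπ : θ^2/π^2 ≤ 1 := by rw [div_le_one (by positivity)]; exact hθπ
  have hratnn : (0:ℝ) ≤ θ^2/π^2 := by positivity
  have h1 : |b + 2*s*Real.cos θ| ≤ (b+2*s) * (1 - K b s*θ^2) := by
    clear hsq hsq2 h5 hsin2 hnn hsin hθπ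
    generalize hKv : K b s = κ at hkθ hk ⊢
    generalize hmv : min b (2*s) = m at hmb hms hmpos hkθ
    generalize hrv : θ^2/π^2 = r at hratπ hratnn hkθ hcosub
    have hexp : (b+2*s)*(1-κ*θ^2) = (b+2*s) - (b+2*s)*(κ*θ^2) := by ring
    rw [abs_le, hexp, hkθ]
    have hcos := Real.neg_one_le_cos θ
    constructor
    · have e3 : m*r ≤ m*1 := mul_le_mul_of_nonneg_left hratπ hmpos.le
      have e4 : 2*s*(-1) ≤ 2*s*Real.cos θ := mul_le_mul_of_nonneg_left hcos (by positivity)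
      linarith
    · have e1 : 2*m*r ≤ 2*(2*s)*r := mul_le_mul_of_nonneg_right (by linarith) hratnn
      have e2 : 2*s*(2*r) ≤ 2*s*(1-Real.cos θ) := mul_le_mul_of_nonneg_left hcosub (by positivity)
      nlinarith
  refine h1.trans ?_
  generalize hKv : K b s = κ at hk ⊢
  have h6 : 1 - κ*θ^2 ≤ Real.exp (-κ*θ^2) := by
    have := Real.add_one_le_exp (-κ*θ^2)
    linarith
  exact mul_le_mul_of_nonneg_left h6 hA.le

lemma sqrt_nat_atTop : Tendsto (fun n : ℕ => Real.sqrt n) atTop atTop := by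
  have h := (tendsto_rpow_atTop (by norm_num : (0:ℝ) < 1/2)).comp
    (tendsto_natCast_atTop_atTop (R := ℝ))
  refine h.congr fun n => ?_
  exact (Real.sqrt_eq_rpow _).symm

lemma pointwise_limit {b s : ℝ} (hb : 0 < b) (hs : 0 < s) {u : ℝ} (hu : 0 < u) :
    Tendsto (fun n : ℕ => ((b + 2*s*Real.cos (u / Real.sqrt n)) / (b+2*s))^n)
      atTop (nhds (Real.exp (-(s/(b+2*s)) * u^2))) := by
  have hA : (0:ℝ) < b + 2*s := by positivity
  have ht0 : Tendsto (fun n : ℕ => u / Real.sqrt n) atTop (nhds 0) :=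
    tendsto_const_nhds.div_atTop sqrt_nat_atTop
  set a : ℕ → ℝ := fun n => 2*s*(1 - Real.cos (u / Real.sqrt n))/(b+2*s) with hadef
  have h_a0 : Tendsto a atTop (nhds 0) := by
    have hcos : Tendsto (fun n : ℕ => Real.cos (u / Real.sqrt n)) atTop (nhds 1) := by
      have := (Real.continuous_cos.tendsto 0).comp ht0
      simp at this; exact this
    have := (((tendsto_const_nhds (x := (1:ℝ)) (f := (atTop : Filter ℕ))).sub hcos).const_mul (2*s)).div_const (b+2*s)
    simpa [hadef] using this
  have ht0' : Tendsto (fun n : ℕ => u / Real.sqrt n) atTop (nhdsWithin 0 {0}ᶜ) := by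
    rw [tendsto_nhdsWithin_iff]
    refine ⟨ht0, ?_⟩
    filter_upwards [Filter.eventually_ge_atTop 1] with n hn
    have hsn : 0 < Real.sqrt n := Real.sqrt_pos.2 (by exact_mod_cast hn)
    simp only [Set.mem_compl_iff, Set.mem_singleton_iff]
    positivity
  have hna : Tendsto (fun n : ℕ => (n:ℝ) * a n) atTop (nhds (s*u^2/(b+2*s))) := by
    have hcomp := tendsto_one_sub_cos_div_sq.comp ht0'
    have h2 := ((hcomp.mul_const (u^2)).const_mul (2*s/(b+2*s)))
    have heq : ∀ᶠ n : ℕ in atTop,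
        (2*s/(b+2*s)) * ((1 - Real.cos (u / Real.sqrt n)) / (u / Real.sqrt n)^2 * u^2)
          = (n:ℝ) * a n := by
      filter_upwards [Filter.eventually_ge_atTop 1] with n hn
      have hn0 : (0:ℝ) < n := by exact_mod_cast hn
      have hsn : 0 < Real.sqrt n := Real.sqrt_pos.2 hn0
      have hsq : (u / Real.sqrt n)^2 = u^2 / n := by
        rw [div_pow, Real.sq_sqrt hn0.le]
      rw [hsq, hadef]
      field_simp
    have h3 : (2*s/(b+2*s)) * (1/2 * u^2) = s*u^2/(b+2*s) := by field_simp
    rw [← h3]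
    exact h2.congr' heq
  have hlog : Tendsto (fun n : ℕ => (n:ℝ) * Real.log (1 - a n)) atTop
      (nhds (-(s*u^2/(b+2*s)))) := by
    have hphi : Tendsto (fun n : ℕ => phiAux (a n)) atTop (nhds (-1)) :=
      tendsto_phiAux.comp h_a0
    have h4 := hna.mul hphi
    rw [show (s*u^2/(b+2*s)) * (-1) = -(s*u^2/(b+2*s)) by ring] at h4
    refine h4.congr fun n => ?_
    by_cases ha : a n = 0
    · simp [ha, phiAux]
    · rw [phiAux, if_neg ha]
      field_simp
  have hexp : Tendsto (fun n : ℕ => Real.exp ((n:ℝ) * Real.log (1 - a n))) atTop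
      (nhds (Real.exp (-(s*u^2/(b+2*s))))) := (Real.continuous_exp.tendsto _).comp hlog
  have hfin : Real.exp (-(s*u^2/(b+2*s))) = Real.exp (-(s/(b+2*s)) * u^2) := by
    congr 1; ring
  rw [← hfin]
  refine hexp.congr' ?_
  have hsmall : ∀ᶠ n : ℕ in atTop, |a n| < 1 := by
    have := h_a0 (Metric.ball_mem_nhds 0 one_pos)
    simpa [Real.dist_eq] using this
  filter_upwards [hsmall] with n hn
  have hpos : 0 < 1 - a n := by
    have := abs_lt.mp hn
    linarith [this.2]
  have hfrac : (b + 2*s*Real.cos (u / Real.sqrt n)) / (b+2*s) = 1 - a n := by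
    rw [hadef]
    field_simp
    ring
  rw [Real.exp_nat_mul, Real.exp_log hpos, hfrac]


lemma laplace (b c : ℝ) (hb : 0 < b) (hc : 0 < c) :
    Tendsto (fun n : ℕ => Real.sqrt n / (b + 2*Real.sqrt c)^n
        * ∫ θ in (0:ℝ)..π, (b + 2*Real.sqrt c*Real.cos θ)^n)
      atTop (nhds (Real.sqrt (π / (Real.sqrt c / (b + 2*Real.sqrt c))) / 2)) := by
  have hπ := Real.pi_pos
  set s := Real.sqrt c with hsdef
  have hs : 0 < s := Real.sqrt_pos.2 hc
  have hA : (0:ℝ) < b + 2*s := by positivity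
  have hk := K_pos hb hs
  set G : ℕ → ℝ → ℝ := fun n => Set.indicator (Set.Ioc 0 (π * Real.sqrt n))
    (fun u => ((b + 2*s*Real.cos (u / Real.sqrt n)) / (b+2*s))^n) with hGdef
  have h_meas : ∀ n : ℕ, AEStronglyMeasurable (G n) volume := by
    intro n
    exact (Continuous.aestronglyMeasurable (by fun_prop)).indicator measurableSet_Ioc
  have h_bound : ∀ n : ℕ, ∀ᵐ u : ℝ, ‖G n u‖ ≤ Real.exp (-(K b s) * u^2) := by
    intro n
    refine Filter.Eventually.of_forall fun u => ?_
    rw [hGdef]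
    simp only []
    by_cases hmem : u ∈ Set.Ioc 0 (π * Real.sqrt n)
    · rw [Set.indicator_of_mem hmem]
      obtain ⟨hu0, huπ⟩ := hmem
      have hsn : 0 < Real.sqrt n := by
        rcases lt_or_ge 0 (Real.sqrt n) with h|h
        · exact h
        · exfalso
          have : π * Real.sqrt n ≤ 0 := mul_nonpos_of_nonneg_of_nonpos hπ.le h
          linarith
      have hn0 : (0:ℝ) < n := by
        rcases Nat.eq_zero_or_pos n with h|h
        · exfalso; subst h; simp at hsn
        · exact_mod_cast h
      have hθ0 : 0 ≤ u / Real.sqrt n := by positivity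
      have hθπ : u / Real.sqrt n ≤ π := by
        rw [div_le_iff₀ hsn]; linarith [huπ]
      have hfb := f_bound hb hs hθ0 hθπ
      have h1 : ‖((b + 2*s*Real.cos (u / Real.sqrt n)) / (b+2*s))^n‖
          = (|b + 2*s*Real.cos (u / Real.sqrt n)| / (b+2*s))^n := by
        rw [norm_pow, Real.norm_eq_abs, abs_div, abs_of_pos hA]
      rw [h1]
      have h2 : |b + 2*s*Real.cos (u / Real.sqrt n)| / (b+2*s)
          ≤ Real.exp (-(K b s) * (u / Real.sqrt n)^2) := by
        rw [div_le_iff₀ hA]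
        linarith [hfb]
      have h3 : (0:ℝ) ≤ |b + 2*s*Real.cos (u / Real.sqrt n)| / (b+2*s) := by positivity
      refine (pow_le_pow_left₀ h3 h2 n).trans ?_
      rw [← Real.exp_nat_mul]
      have h4 : (n:ℝ) * (-(K b s) * (u / Real.sqrt n)^2) = -(K b s) * u^2 := by
        rw [div_pow, Real.sq_sqrt hn0.le]
        field_simp
      rw [h4]
    · rw [Set.indicator_of_notMem hmem]
      simp [(Real.exp_pos _).le]
  have h_lim : ∀ᵐ u : ℝ, Tendsto (fun n => G n u) atTop
      (nhds (Set.indicator (Set.Ioi (0:ℝ)) (fun u => Real.exp (-(s/(b+2*s)) * u^2)) u)) := by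
    refine Filter.Eventually.of_forall fun u => ?_
    rcases le_or_gt u 0 with hu | hu
    · have hval : Set.indicator (Set.Ioi (0:ℝ)) (fun u => Real.exp (-(s/(b+2*s)) * u^2)) u = 0 :=
        Set.indicator_of_notMem (by simpa using hu) _
      rw [hval]
      have heq0 : ∀ n : ℕ, G n u = 0 := by
        intro n
        rw [hGdef]
        refine Set.indicator_of_notMem ?_ _
        intro hmem
        exact absurd hmem.1 (not_lt.mpr hu)
      simp only [heq0]
      exact tendsto_const_nhds
    · have hval : Set.indicator (Set.Ioi (0:ℝ)) (fun u => Real.exp (-(s/(b+2*s)) * u^2)) u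
          = Real.exp (-(s/(b+2*s)) * u^2) := Set.indicator_of_mem hu _
      rw [hval]
      refine (pointwise_limit hb hs hu).congr' ?_
      have hev : ∀ᶠ n : ℕ in atTop, u ≤ π * Real.sqrt n := by
        have h5 : Tendsto (fun n : ℕ => π * Real.sqrt n) atTop atTop :=
          (sqrt_nat_atTop.const_mul_atTop hπ)
        exact h5.eventually_ge_atTop u
      filter_upwards [hev] with n hn
      rw [hGdef]
      simp only []
      exact (Set.indicator_of_mem (Set.mem_Ioc.mpr ⟨hu, hn⟩)
        (fun u => ((b + 2*s*Real.cos (u / Real.sqrt n)) / (b+2*s))^n)).symm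
  have hdct := MeasureTheory.tendsto_integral_of_dominated_convergence _
    h_meas (integrable_exp_neg_mul_sq hk) h_bound h_lim
  have hlimval : (∫ u : ℝ, Set.indicator (Set.Ioi (0:ℝ))
      (fun u => Real.exp (-(s/(b+2*s)) * u^2)) u)
      = Real.sqrt (π / (s / (b+2*s))) / 2 := by
    rw [MeasureTheory.integral_indicator measurableSet_Ioi]
    exact integral_gaussian_Ioi (s/(b+2*s))
  rw [hlimval] at hdct
  refine hdct.congr' ?_
  filter_upwards [Filter.eventually_ge_atTop 1] with n hn
  have hn0 : (0:ℝ) < n := by exact_mod_cast hn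
  have hsn : 0 < Real.sqrt n := Real.sqrt_pos.2 hn0
  have h6 : (∫ u : ℝ, G n u) = ∫ u in (0:ℝ)..(π * Real.sqrt n),
      ((b + 2*s*Real.cos (u / Real.sqrt n)) / (b+2*s))^n := by
    rw [hGdef]
    rw [intervalIntegral.integral_of_le (by positivity)]
    rw [MeasureTheory.integral_indicator measurableSet_Ioc]
  rw [h6]
  have h7 : (∫ u in (0:ℝ)..(π * Real.sqrt n),
      ((b + 2*s*Real.cos (u / Real.sqrt n)) / (b+2*s))^n)
      = (∫ u in (0:ℝ)..(π * Real.sqrt n), (b + 2*s*Real.cos (u / Real.sqrt n))^n) / (b+2*s)^n := by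
    rw [← intervalIntegral.integral_div]
    congr 1
    ext u
    rw [div_pow]
  rw [h7]
  have h8 : (∫ u in (0:ℝ)..(π * Real.sqrt n), (b + 2*s*Real.cos (u / Real.sqrt n))^n)
      = Real.sqrt n • ∫ x in (0:ℝ)..π, (b + 2*s*Real.cos x)^n := by
    have h9 : π * Real.sqrt n / Real.sqrt n = π := by field_simp
    rw [intervalIntegral.integral_comp_div (fun x => (b + 2*s*Real.cos x)^n) hsn.ne',
      zero_div, h9]
  rw [h8, smul_eq_mul]
  ring

lemma integral_two_pi_eq (b s : ℝ) (n : ℕ) :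
    (∫ θ in (0:ℝ)..(2*π), (b + 2*s*Real.cos θ)^n)
      = 2 * ∫ θ in (0:ℝ)..π, (b + 2*s*Real.cos θ)^n := by
  have hcont : Continuous (fun θ : ℝ => (b + 2*s*Real.cos θ)^n) := by fun_prop
  have hint : ∀ a b' : ℝ, IntervalIntegrable (fun θ : ℝ => (b + 2*s*Real.cos θ)^n) volume a b' :=
    fun a b' => hcont.intervalIntegrable a b'
  have hsplit : (∫ θ in (0:ℝ)..(2*π), (b + 2*s*Real.cos θ)^n)
      = (∫ θ in (0:ℝ)..π, (b + 2*s*Real.cos θ)^n)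
        + ∫ θ in π..(2*π), (b + 2*s*Real.cos θ)^n :=
    (intervalIntegral.integral_add_adjacent_intervals (hint 0 π) (hint π (2*π))).symm
  have hsym : (∫ θ in π..(2*π), (b + 2*s*Real.cos θ)^n)
      = ∫ θ in (0:ℝ)..π, (b + 2*s*Real.cos θ)^n := by
    have h1 := intervalIntegral.integral_comp_sub_left
      (a := (0:ℝ)) (b := π) (fun θ : ℝ => (b + 2*s*Real.cos θ)^n) (2*π)
    rw [sub_zero] at h1
    have h2 : (2*π) - π = π := by ring
    rw [h2] at h1
    rw [← h1]
    congr 1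
    ext θ
    rw [Real.cos_two_pi_sub]
  rw [hsplit, hsym]
  ring

theorem stmt_9 (b c : ℝ) (hb : 0 < b) (hc : 0 < c) :
    Tendsto (fun n : ℕ =>
        T n b c /
          ((b + 2 * Real.sqrt c) ^ ((n : ℝ) + 1 / 2) /
            (2 * c ^ ((1 : ℝ) / 4) * Real.sqrt (Real.pi * n))))
      atTop (nhds 1) := by
  have hπ := Real.pi_pos
  set s := Real.sqrt c with hsdef
  have hs : 0 < s := Real.sqrt_pos.2 hc
  set M : ℝ := b + 2*s with hMdef
  have hM : 0 < M := by positivity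
  have hc4 : (0:ℝ) < c ^ ((1:ℝ)/4) := Real.rpow_pos_of_pos hc _
  have hsqrt_s : Real.sqrt s = c ^ ((1:ℝ)/4) := by
    rw [hsdef, Real.sqrt_eq_rpow, Real.sqrt_eq_rpow, ← Real.rpow_mul hc.le]
    norm_num
  set Kc : ℝ := 2 * c ^ ((1:ℝ)/4) * Real.sqrt π / (π * Real.sqrt M) with hKcdef
  have hSK : Real.sqrt (π / (s / M)) / 2 * Kc = 1 := by
    have h1 : π / (s / M) = π * M / s := by field_simp
    have h2 : Real.sqrt (π * M / s) = Real.sqrt π * Real.sqrt M / Real.sqrt s := by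
      rw [Real.sqrt_div (by positivity : (0:ℝ) ≤ π * M), Real.sqrt_mul hπ.le]
    have hππ : Real.sqrt π * Real.sqrt π = π := Real.mul_self_sqrt hπ.le
    have hMM : Real.sqrt M * Real.sqrt M = M := Real.mul_self_sqrt hM.le
    have hsqM : 0 < Real.sqrt M := Real.sqrt_pos.2 hM
    have hsqπ : 0 < Real.sqrt π := Real.sqrt_pos.2 hπ
    rw [h1, h2, hsqrt_s, hKcdef]
    field_simp
    linear_combination hππ
  have hlap := (laplace b c hb hc).mul_const Kc
  rw [hSK] at hlap
  refine hlap.congr' ?_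
  filter_upwards [Filter.eventually_ge_atTop 1] with n hn
  have hn0 : (0:ℝ) < n := by exact_mod_cast hn
  have hsn : 0 < Real.sqrt n := Real.sqrt_pos.2 hn0
  have hTn : T n b c = (∫ θ in (0:ℝ)..π, (b + 2*s*Real.cos θ)^n) / π := by
    rw [T_eq_integral b c hc n, integral_two_pi_eq]
    field_simp
    ring
  have hrpow : M ^ ((n:ℝ) + 1/2) = M^n * Real.sqrt M := by
    rw [Real.rpow_add hM, Real.rpow_natCast, Real.sqrt_eq_rpow]
  rw [hTn, hrpow, hKcdef]
  have hMn : (0:ℝ) < M^n := pow_pos hM n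
  have hsqM : 0 < Real.sqrt M := Real.sqrt_pos.2 hM
  have hsqπ : 0 < Real.sqrt π := Real.sqrt_pos.2 hπ
  have hsπn : Real.sqrt (π * n) = Real.sqrt π * Real.sqrt n := Real.sqrt_mul hπ.le _
  rw [hsπn]
  field_simp
  ring
end

section
/- For c > 0 and b = 4\sqrt{c}, T_n(b,c)/c^{n/2} \sim 3 \cdot 6^n / \sqrt{6 \pi n} as n \to \infty; i.e. the ratio of the two sides tends to 1. -/
set_option maxHeartbeats 1000000

open Filter Polynomial Real Finset Stirling Topology

noncomputable def w (m : ℕ) : ℝ := (m.centralBinom : ℝ) / 4 ^ m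
noncomputable def pb (n j : ℕ) : ℝ := (n.choose j : ℝ) * (1/3 : ℝ)^j * (2/3 : ℝ)^(n-j)
noncomputable def u (n : ℕ) : ℝ :=
  ∑ k ∈ range (n + 1), (n.choose k : ℝ) * (k.centralBinom : ℝ) * 2 ^ (n - k)


lemma T_eq (n : ℕ) (c : ℝ) (hc : 0 < c) :
    T n (4 * Real.sqrt c) c =
      (Real.sqrt c) ^ n *
        ∑ k ∈ range (n + 1), (n.choose k : ℝ) * (k.centralBinom : ℝ) * 2 ^ (n - k) := by
  set s := Real.sqrt c with hs
  have hcs : c = s ^ 2 := (Real.sq_sqrt hc.le).symm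
  have hpoly : (X ^ 2 + C (4 * s) * X + C c : ℝ[X]) = (X + C s) ^ 2 + C (2 * s) * X := by
    rw [hcs]; simp only [map_mul, map_pow, map_ofNat]; ring
  have hcoeff : ∀ k ∈ range (n + 1),
      (((X + C s) ^ 2) ^ k * (C (2 * s) * X) ^ (n - k) * (n.choose k : ℝ[X])).coeff n
        = (n.choose k : ℝ) * (k.centralBinom : ℝ) * 2 ^ (n - k) * s ^ n := by
    intro k hk
    rw [mem_range, Nat.lt_succ_iff] at hk
    have h1 : ((X + C s) ^ 2) ^ k * (C (2 * s) * X) ^ (n - k) * (n.choose k : ℝ[X])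
        = C ((2 * s) ^ (n - k) * (n.choose k : ℝ)) * ((X + C s) ^ (2 * k) * X ^ (n - k)) := by
      rw [← pow_mul]
      simp only [mul_pow, map_mul, map_pow, Polynomial.C_eq_natCast]
      ring
    rw [h1, coeff_C_mul, coeff_mul_X_pow', if_pos (Nat.sub_le n k)]
    have h2 : n - (n - k) = k := by omega
    rw [h2, coeff_X_add_C_pow]
    have h3 : 2 * k - k = k := by omega
    rw [h3]
    have : (Nat.centralBinom k : ℝ) = ((2 * k).choose k : ℝ) := by
      rw [Nat.centralBinom]
    rw [this]
    have hsn : s ^ n = s ^ k * s ^ (n - k) := by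
      rw [← pow_add]; congr 1; omega
    rw [hsn, mul_pow]
    ring
  calc T n (4 * s) c = (((X + C s) ^ 2 + C (2 * s) * X) ^ n).coeff n := by
        rw [T, hpoly]
    _ = ∑ k ∈ range (n + 1),
          (((X + C s) ^ 2) ^ k * (C (2 * s) * X) ^ (n - k) * (n.choose k : ℝ[X])).coeff n := by
        rw [add_pow, finset_sum_coeff]
    _ = ∑ k ∈ range (n + 1), (n.choose k : ℝ) * (k.centralBinom : ℝ) * 2 ^ (n - k) * s ^ n :=
        Finset.sum_congr rfl hcoeff
    _ = _ := by rw [← Finset.sum_mul, mul_comm]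


lemma L0 (x y : ℝ) (n : ℕ) :
    ∑ j ∈ range (n + 1), (n.choose j : ℝ) * x ^ j * y ^ (n - j) = (x + y) ^ n := by
  rw [add_pow]
  exact Finset.sum_congr rfl fun j hj => by ring

lemma L1 (x y : ℝ) (n : ℕ) :
    ∑ j ∈ range (n + 1), (j : ℝ) * (n.choose j : ℝ) * x ^ j * y ^ (n - j)
      = n * x * (x + y) ^ (n - 1) := by
  cases n with
  | zero => simp
  | succ m =>
    rw [Finset.sum_range_succ' _ (m + 1)]
    simp only [Nat.cast_zero, zero_mul, add_zero, Nat.choose_zero_right]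
    have key : ∀ i : ℕ, ((i + 1 : ℕ) : ℝ) * ((m + 1).choose (i + 1) : ℝ)
        = ((m + 1 : ℕ) : ℝ) * (m.choose i : ℝ) := by
      intro i
      have := Nat.add_one_mul_choose_eq m i
      have h2 : ((m.succ * m.choose i : ℕ) : ℝ) = (((m + 1).choose (i + 1) * (i + 1) : ℕ) : ℝ) := by
        rw [this]
      push_cast at h2 ⊢
      linarith
    calc ∑ i ∈ range (m + 1), ((i + 1 : ℕ) : ℝ) * ((m + 1).choose (i + 1) : ℝ) * x ^ (i + 1) * y ^ (m + 1 - (i + 1))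
        = ∑ i ∈ range (m + 1), ((m + 1 : ℕ) : ℝ) * x * ((m.choose i : ℝ) * x ^ i * y ^ (m - i)) := by
          refine Finset.sum_congr rfl fun i hi => ?_
          rw [show (m + 1 - (i + 1)) = m - i by omega, key i]
          ring
      _ = ((m + 1 : ℕ) : ℝ) * x * (x + y) ^ m := by
          rw [← Finset.mul_sum, L0]
      _ = _ := by push_cast; ring_nf

lemma L2 (x y : ℝ) (n : ℕ) :
    ∑ j ∈ range (n + 1), (j : ℝ) * ((j : ℝ) - 1) * (n.choose j : ℝ) * x ^ j * y ^ (n - j)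
      = n * ((n : ℝ) - 1) * x ^ 2 * (x + y) ^ (n - 2) := by
  cases n with
  | zero => simp
  | succ m =>
    rw [Finset.sum_range_succ' _ (m + 1)]
    simp only [Nat.cast_zero, zero_mul, add_zero, mul_zero]
    have key : ∀ i : ℕ, ((i + 1 : ℕ) : ℝ) * ((m + 1).choose (i + 1) : ℝ)
        = ((m + 1 : ℕ) : ℝ) * (m.choose i : ℝ) := by
      intro i
      have := Nat.add_one_mul_choose_eq m i
      have h2 : ((m.succ * m.choose i : ℕ) : ℝ) = (((m + 1).choose (i + 1) * (i + 1) : ℕ) : ℝ) := by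
        rw [this]
      push_cast at h2 ⊢
      linarith
    calc ∑ i ∈ range (m + 1), ((i + 1 : ℕ) : ℝ) * (((i + 1 : ℕ) : ℝ) - 1) * ((m + 1).choose (i + 1) : ℝ) * x ^ (i + 1) * y ^ (m + 1 - (i + 1))
        = ∑ i ∈ range (m + 1), ((m + 1 : ℕ) : ℝ) * x * ((i : ℝ) * (m.choose i : ℝ) * x ^ i * y ^ (m - i)) := by
          refine Finset.sum_congr rfl fun i hi => ?_
          rw [show (m + 1 - (i + 1)) = m - i by omega]
          have h3 : ((i + 1 : ℕ) : ℝ) * (((i + 1 : ℕ) : ℝ) - 1) * ((m + 1).choose (i + 1) : ℝ)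
              = (i : ℝ) * (((m + 1 : ℕ) : ℝ) * (m.choose i : ℝ)) := by
            rw [← key i]; push_cast; ring
          rw [mul_assoc (((i+1:ℕ):ℝ) * (((i+1:ℕ):ℝ) - 1)), ← mul_assoc,  h3]
          ring
      _ = ((m + 1 : ℕ) : ℝ) * x * ((m : ℝ) * x * (x + y) ^ (m - 1)) := by
          rw [← Finset.mul_sum, L1]
      _ = _ := by
          cases m with
          | zero => simp
          | succ l => push_cast; ring

lemma L3 (n : ℕ) :
    ∑ j ∈ range (n + 1), ((n.choose j : ℝ) * (1/3)^j * (2/3)^(n-j)) * ((j:ℝ) - n/3)^2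
      = 2*(n:ℝ)/9 := by
  have expand : ∀ j ∈ range (n+1),
      ((n.choose j : ℝ) * (1/3)^j * (2/3)^(n-j)) * ((j:ℝ) - n/3)^2
      = (j:ℝ)*((j:ℝ)-1)*(n.choose j : ℝ)*(1/3:ℝ)^j*(2/3:ℝ)^(n-j)
        + ((1 - 2*(n:ℝ)/3) * ((j:ℝ)*(n.choose j:ℝ)*(1/3:ℝ)^j*(2/3:ℝ)^(n-j))
        + ((n:ℝ)/3)^2 * ((n.choose j:ℝ)*(1/3:ℝ)^j*(2/3:ℝ)^(n-j))) := fun j _ => by ring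
  rw [Finset.sum_congr rfl expand, Finset.sum_add_distrib, Finset.sum_add_distrib,
    ← Finset.mul_sum, ← Finset.mul_sum, L0, L1, L2]
  have h1 : (1/3 + 2/3 : ℝ) = 1 := by norm_num
  rw [h1, one_pow, one_pow, one_pow]
  ring




lemma w_nonneg (m : ℕ) : 0 ≤ w m := by rw [w]; positivity

lemma centralBinom_le (m : ℕ) : (m.centralBinom : ℕ) ≤ 4 ^ m := by
  have h := Nat.sum_range_choose (2 * m)
  have hmem : m ∈ range (2 * m + 1) := by simp; omega
  have := Finset.single_le_sum (f := fun i => (2 * m).choose i)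
    (fun i _ => Nat.zero_le _) hmem
  calc m.centralBinom = (2 * m).choose m := rfl
    _ ≤ ∑ i ∈ range (2 * m + 1), (2 * m).choose i := this
    _ = 2 ^ (2 * m) := h
    _ = 4 ^ m := by rw [pow_mul]; norm_num

lemma w_le_one (m : ℕ) : w m ≤ 1 := by
  rw [w, div_le_one (by positivity)]
  exact_mod_cast Nat.cast_le.mpr (centralBinom_le m) |>.trans_eq (by push_cast; ring)

lemma stirling_key (m : ℕ) (hm : 1 ≤ m) :
    Real.sqrt π * stirlingSeq (2 * m) / (stirlingSeq m) ^ 2 = Real.sqrt (π * m) * w m := by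
  have hm0 : (0 : ℝ) < m := by exact_mod_cast hm
  have hfact : ((2 * m).factorial : ℝ) = (m.centralBinom : ℝ) * (m.factorial : ℝ) ^ 2 := by
    have h := Nat.choose_mul_factorial_mul_factorial (Nat.le_mul_of_pos_left m two_pos)
    have h2 : 2 * m - m = m := by omega
    rw [h2] at h
    calc ((2 * m).factorial : ℝ) = (((2 * m).choose m) * m.factorial * m.factorial : ℕ) := by
          rw [h]
      _ = _ := by push_cast [Nat.centralBinom]; ring
  rw [stirlingSeq, stirlingSeq, w]
  have hsqrt4 : Real.sqrt (2 * ((2 * m : ℕ) : ℝ)) = 2 * Real.sqrt m := by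
    push_cast
    rw [show (2 : ℝ) * (2 * m) = 4 * m by ring, show (4 : ℝ) * m = 2^2 * m by norm_num,
      Real.sqrt_mul (by positivity), Real.sqrt_sq (by norm_num)]
  have hpow : (((2 * m : ℕ) : ℝ) / Real.exp 1) ^ (2 * m)
      = 4 ^ m * (((m : ℝ) / Real.exp 1) ^ m) ^ 2 := by
    push_cast
    rw [← pow_mul, show m * 2 = 2 * m from mul_comm m 2,
      show (2 * (m : ℝ)) / Real.exp 1 = 2 * ((m : ℝ) / Real.exp 1) by ring, mul_pow,
      show (2:ℝ) ^ (2*m) = 4 ^ m by rw [pow_mul]; norm_num]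
  rw [hfact, hsqrt4, hpow]
  have h1 : ((m : ℝ) / Real.exp 1) ^ m ≠ 0 := by positivity
  have h2 : Real.sqrt (2 * m) ≠ 0 := by positivity
  have h3 : (m.factorial : ℝ) ≠ 0 := by positivity
  have h4 : Real.sqrt ((m : ℝ)) ≠ 0 := by positivity
  have h5 : Real.sqrt (π * m) = Real.sqrt π * Real.sqrt m := Real.sqrt_mul pi_pos.le _
  have h6 : Real.sqrt (2 * m) ^ 2 = 2 * m := Real.sq_sqrt (by positivity)
  rw [h5]
  field_simp
  ring_nf
  rw [Real.sq_sqrt (by positivity : (0:ℝ) ≤ m * 2), Real.sq_sqrt (by positivity : (0:ℝ) ≤ m)]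
  ring

lemma r_tendsto : Tendsto (fun m : ℕ => Real.sqrt (π * m) * w m) atTop (𝓝 1) := by
  have hst := tendsto_stirlingSeq_sqrt_pi
  have h2m : Tendsto (fun m : ℕ => 2 * m) atTop atTop :=
    tendsto_atTop_mono (fun m => Nat.le_mul_of_pos_left m two_pos) tendsto_id
  have hnum : Tendsto (fun m : ℕ => Real.sqrt π * stirlingSeq (2 * m)) atTop
      (𝓝 (Real.sqrt π * Real.sqrt π)) := tendsto_const_nhds.mul (hst.comp h2m)
  have hden : Tendsto (fun m : ℕ => (stirlingSeq m) ^ 2) atTop (𝓝 (Real.sqrt π ^ 2)) :=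
    hst.pow 2
  have hne : Real.sqrt π ^ 2 ≠ 0 := by
    have := Real.sqrt_pos.mpr pi_pos
    positivity
  have hdiv := hnum.div hden hne
  have hval : Real.sqrt π * Real.sqrt π / Real.sqrt π ^ 2 = 1 := by
    rw [sq]
    field_simp
  rw [hval] at hdiv
  refine hdiv.congr' ?_
  filter_upwards [eventually_ge_atTop 1] with m hm
  exact stirling_key m hm



lemma pb_nonneg (n j : ℕ) : 0 ≤ pb n j := by rw [pb]; positivity

lemma pb_sum (n : ℕ) : ∑ j ∈ range (n + 1), pb n j = 1 := by
  simp only [pb]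
  rw [L0]
  norm_num

lemma pb_var (n : ℕ) : ∑ j ∈ range (n + 1), pb n j * ((j:ℝ) - n/3)^2 = 2*(n:ℝ)/9 := L3 n

lemma sqrt_abs_sub_one (x : ℝ) (hx : 0 ≤ x) : |Real.sqrt x - 1| ≤ |x - 1| := by
  have h1 : (Real.sqrt x - 1) * (Real.sqrt x + 1) = x - 1 := by
    have := Real.sq_sqrt hx
    nlinarith [this]
  have h2 : (0:ℝ) < Real.sqrt x + 1 := by positivity
  have h3 : |Real.sqrt x - 1| * (Real.sqrt x + 1) = |x - 1| := by
    rw [← h1, abs_mul, abs_of_pos h2]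
  nlinarith [abs_nonneg (Real.sqrt x - 1), h3, Real.sqrt_nonneg x]

lemma main_lim :
    Tendsto (fun n : ℕ =>
        ∑ j ∈ range (n + 1), pb n j * (Real.sqrt (6 * π * n) / 3 * w (n - j)))
      atTop (𝓝 1) := by
  rw [Metric.tendsto_atTop]
  intro ε hε
  set δ : ℝ := min (ε/8) (1/6) with hδdef
  have hδpos : 0 < δ := lt_min (by positivity) (by norm_num)
  have hδ6 : δ ≤ 1/6 := min_le_right _ _
  have hδε : δ ≤ ε/8 := min_le_left _ _
  -- control of r
  obtain ⟨N₁, hN₁⟩ := (Metric.tendsto_atTop.mp r_tendsto) (ε/8) (by positivity)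
  -- control of bad sum
  have hinv : Tendsto (fun n : ℕ => ((n:ℝ))⁻¹) atTop (𝓝 0) :=
    tendsto_inv_atTop_nhds_zero_nat
  have hsq : Tendsto (fun n : ℕ => Real.sqrt (6*π*((n:ℝ))⁻¹)) atTop (𝓝 0) := by
    have h1 : Tendsto (fun n : ℕ => 6*π*((n:ℝ))⁻¹) atTop (𝓝 0) := by
      have := hinv.const_mul (6*π)
      simpa using this
    have h2 := h1.sqrt
    simpa using h2
  have hbad0 : Tendsto (fun n : ℕ =>
      Real.sqrt (6*π*((n:ℝ))⁻¹) * (2/(27*δ^2)) + 2/(9*δ^2) * ((n:ℝ))⁻¹) atTop (𝓝 0) := by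
    have := (hsq.mul_const (2/(27*δ^2))).add (hinv.const_mul (2/(9*δ^2)))
    simpa using this
  obtain ⟨N₂, hN₂⟩ := (Metric.tendsto_atTop.mp hbad0) (ε/2) (by positivity)
  refine ⟨max (2*N₁ + 2) N₂, fun n hn => ?_⟩
  have hnN₁ : 2*N₁ + 2 ≤ n := le_trans (le_max_left _ _) hn
  have hnN₂ : N₂ ≤ n := le_trans (le_max_right _ _) hn
  have hn2 : 2 ≤ n := by omega
  have hn0 : (0:ℝ) < n := by exact_mod_cast (by omega : 0 < n)
  -- notation
  set φ : ℕ → ℝ := fun j => Real.sqrt (6 * π * n) / 3 * w (n - j) with hφdef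
  have hφ_nonneg : ∀ j, 0 ≤ φ j := fun j => by
    have := w_nonneg (n - j); positivity
  have hφ_le : ∀ j, φ j ≤ Real.sqrt (6 * π * n) / 3 := fun j => by
    have h1 := w_le_one (n - j)
    have h2 : (0:ℝ) ≤ Real.sqrt (6 * π * n) / 3 := by positivity
    calc φ j = Real.sqrt (6 * π * n) / 3 * w (n - j) := rfl
      _ ≤ Real.sqrt (6 * π * n) / 3 * 1 := by
          exact mul_le_mul_of_nonneg_left h1 h2
      _ = _ := mul_one _
  -- S - 1 = ∑ pb (φ - 1)
  have hdiff : (∑ j ∈ range (n + 1), pb n j * φ j) - 1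
      = ∑ j ∈ range (n + 1), pb n j * (φ j - 1) := by
    rw [eq_comm]
    calc ∑ j ∈ range (n + 1), pb n j * (φ j - 1)
        = ∑ j ∈ range (n + 1), (pb n j * φ j - pb n j) := by
          exact Finset.sum_congr rfl fun j _ => by ring
      _ = (∑ j ∈ range (n + 1), pb n j * φ j) - ∑ j ∈ range (n + 1), pb n j :=
          Finset.sum_sub_distrib _ _
      _ = _ := by rw [pb_sum]
  rw [Real.dist_eq, hdiff]
  -- split good/bad
  set G := (range (n + 1)).filter (fun j : ℕ => |(j:ℝ) - n/3| ≤ δ * n) with hGdef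
  set B := (range (n + 1)).filter (fun j : ℕ => ¬ |(j:ℝ) - n/3| ≤ δ * n) with hBdef
  have habs : |∑ j ∈ range (n + 1), pb n j * (φ j - 1)|
      ≤ ∑ j ∈ range (n + 1), pb n j * |φ j - 1| := by
    refine le_trans (Finset.abs_sum_le_sum_abs _ _) ?_
    refine Finset.sum_le_sum fun j _ => ?_
    rw [abs_mul, abs_of_nonneg (pb_nonneg n j)]
  have hsplit : ∑ j ∈ range (n + 1), pb n j * |φ j - 1|
      = (∑ j ∈ G, pb n j * |φ j - 1|) + ∑ j ∈ B, pb n j * |φ j - 1| :=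
    (Finset.sum_filter_add_sum_filter_not _ _ _).symm
  -- Chebyshev: bad mass
  have cheb : ∑ j ∈ B, pb n j ≤ 2/(9*δ^2*n) := by
    have key : ∀ j ∈ B, pb n j ≤ pb n j * ((j:ℝ) - n/3)^2 / (δ*n)^2 := by
      intro j hj
      rw [hBdef, Finset.mem_filter] at hj
      have h1 : δ * n < |(j:ℝ) - n/3| := not_le.mp hj.2
      have h2 : (δ*n)^2 ≤ ((j:ℝ) - n/3)^2 := by
        have h3 : (0:ℝ) ≤ δ * n := by positivity
        nlinarith [abs_nonneg ((j:ℝ) - n/3), sq_abs ((j:ℝ) - n/3)]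
      calc pb n j = pb n j * 1 := (mul_one _).symm
        _ ≤ pb n j * (((j:ℝ) - n/3)^2 / (δ*n)^2) := by
            refine mul_le_mul_of_nonneg_left ?_ (pb_nonneg n j)
            rw [le_div_iff₀ (by positivity : (0:ℝ) < (δ*n)^2), one_mul]
            exact h2
        _ = pb n j * ((j:ℝ) - n/3)^2 / (δ*n)^2 := by ring
    calc ∑ j ∈ B, pb n j ≤ ∑ j ∈ B, pb n j * ((j:ℝ) - n/3)^2 / (δ*n)^2 :=
          Finset.sum_le_sum key
      _ ≤ ∑ j ∈ range (n+1), pb n j * ((j:ℝ) - n/3)^2 / (δ*n)^2 := by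
          refine Finset.sum_le_sum_of_subset_of_nonneg (Finset.filter_subset _ _) ?_
          intro j _ _
          have := pb_nonneg n j
          positivity
      _ = (∑ j ∈ range (n+1), pb n j * ((j:ℝ) - n/3)^2) / (δ*n)^2 := by
          rw [← Finset.sum_div]
      _ = (2*(n:ℝ)/9) / (δ*n)^2 := by rw [pb_var]
      _ = 2/(9*δ^2*n) := by field_simp
  -- bad part bound
  have hBbound : ∑ j ∈ B, pb n j * |φ j - 1|
      ≤ Real.sqrt (6*π*((n:ℝ))⁻¹) * (2/(27*δ^2)) + 2/(9*δ^2) * ((n:ℝ))⁻¹ := by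
    have hterm : ∀ j ∈ B, pb n j * |φ j - 1| ≤ pb n j * (Real.sqrt (6*π*n)/3 + 1) := by
      intro j _
      refine mul_le_mul_of_nonneg_left ?_ (pb_nonneg n j)
      refine le_trans (abs_sub _ _) ?_
      rw [abs_of_nonneg (hφ_nonneg j), abs_one]
      linarith [hφ_le j]
    calc ∑ j ∈ B, pb n j * |φ j - 1| ≤ ∑ j ∈ B, pb n j * (Real.sqrt (6*π*n)/3 + 1) :=
          Finset.sum_le_sum hterm
      _ = (∑ j ∈ B, pb n j) * (Real.sqrt (6*π*n)/3 + 1) := by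
          rw [← Finset.sum_mul]
      _ ≤ (2/(9*δ^2*n)) * (Real.sqrt (6*π*n)/3 + 1) :=
          mul_le_mul_of_nonneg_right cheb (by positivity)
      _ = Real.sqrt (6*π*n)/n * (2/(27*δ^2)) + 2/(9*δ^2) * ((n:ℝ))⁻¹ := by
          rw [show (2/(9*δ^2*(n:ℝ))) * (Real.sqrt (6*π*n)/3 + 1)
            = Real.sqrt (6*π*n)/n * (2/(27*δ^2)) + 2/(9*δ^2) * ((n:ℝ))⁻¹ from by
              field_simp; ring]
      _ = Real.sqrt (6*π*((n:ℝ))⁻¹) * (2/(27*δ^2)) + 2/(9*δ^2) * ((n:ℝ))⁻¹ := by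
          congr 1
          congr 1
          rw [show 6*π*((n:ℝ))⁻¹ = (6*π*n)/(n:ℝ)^2 by field_simp,
            Real.sqrt_div (by positivity), Real.sqrt_sq hn0.le]
  -- good part
  have hGbound : ∀ j ∈ G, pb n j * |φ j - 1| ≤ pb n j * (ε/2) := by
    intro j hj
    rw [hGdef, Finset.mem_filter, Finset.mem_range] at hj
    obtain ⟨hjr, hjd⟩ := hj
    have hjle : j ≤ n := by omega
    set m := n - j with hm
    have hmcast : (m:ℝ) = (n:ℝ) - j := by rw [hm, Nat.cast_sub hjle]
    have habs' := abs_le.mp hjd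
    have hδn : δ * n ≤ 1/6 * n := mul_le_mul_of_nonneg_right hδ6 hn0.le
    have hmlow : (n:ℝ)/2 ≤ m := by
      rw [hmcast]; linarith [habs'.2]
    have hmlow2 : (2/3 - δ) * n ≤ (m:ℝ) := by
      rw [hmcast]; linarith [habs'.2]
    have hmup : (m:ℝ) ≤ (2/3 + δ) * n := by
      rw [hmcast]; linarith [habs'.1]
    have hm0 : (0:ℝ) < m := lt_of_lt_of_le (by linarith) hmlow
    have hm1 : N₁ ≤ m := by
      have hc : ((2*N₁+2:ℕ):ℝ) ≤ n := Nat.cast_le.mpr hnN₁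
      push_cast at hc
      have : (N₁:ℝ) ≤ (m:ℝ) := by linarith [hmlow]
      exact_mod_cast this
    set q := Real.sqrt (2*n/(3*m)) with hq
    have hφeq : φ j = q * (Real.sqrt (π*m) * w m) := by
      have hstart : φ j = Real.sqrt (6*π*(n:ℝ))/3 * w m := rfl
      have e1 : Real.sqrt (6*π*(n:ℝ)/9) = Real.sqrt (6*π*(n:ℝ))/3 := by
        rw [show (6*π*(n:ℝ)/9) = (6*π*(n:ℝ))/3^2 by ring,
          Real.sqrt_div (by positivity), Real.sqrt_sq (by norm_num)]
      have e2 : q * Real.sqrt (π*m) = Real.sqrt (6*π*n/9) := by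
        rw [hq, ← Real.sqrt_mul (by positivity)]
        congr 1
        field_simp
        ring
      rw [hstart, ← e1, ← e2]
      ring
    have hq2 : (0:ℝ) ≤ 2*n/(3*m) := by positivity
    have hqnn : 0 ≤ q := Real.sqrt_nonneg _
    have hq_le : q ≤ 2 := by
      rw [hq]
      have h4 : 2*(n:ℝ)/(3*m) ≤ 4 := by
        rw [div_le_iff₀ (by positivity)]
        nlinarith [hmlow]
      calc Real.sqrt (2*n/(3*m)) ≤ Real.sqrt 4 := Real.sqrt_le_sqrt h4
        _ = 2 := by
            rw [show (4:ℝ) = 2^2 by norm_num, Real.sqrt_sq (by norm_num)]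
    have hq_close : |q - 1| ≤ 2*δ := by
      refine le_trans (sqrt_abs_sub_one _ hq2) ?_
      rw [abs_le]
      constructor
      · have h' : 1 - 2*δ ≤ 2*(n:ℝ)/(3*m) := by
          rw [le_div_iff₀ (by positivity)]
          nlinarith [hmup, hδpos.le, hδ6, hn0.le]
        linarith
      · have h' : 2*(n:ℝ)/(3*m) ≤ 1 + 2*δ := by
          rw [div_le_iff₀ (by positivity)]
          nlinarith [hmlow2, hδpos.le, hδ6, hn0.le]
        linarith
    have hr_close : |Real.sqrt (π*m) * w m - 1| ≤ ε/8 := by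
      have := hN₁ m hm1
      rw [Real.dist_eq] at this
      exact this.le
    have hφ_close : |φ j - 1| ≤ ε/2 := by
      rw [hφeq]
      have hring : q * (Real.sqrt (π*m) * w m) - 1
          = q * (Real.sqrt (π*m) * w m - 1) + (q - 1) := by ring
      rw [hring]
      calc |q * (Real.sqrt (π*m) * w m - 1) + (q - 1)|
          ≤ |q * (Real.sqrt (π*m) * w m - 1)| + |q - 1| := abs_add_le _ _
        _ = q * |Real.sqrt (π*m) * w m - 1| + |q - 1| := by
            rw [abs_mul, abs_of_nonneg hqnn]
        _ ≤ 2 * (ε/8) + 2*δ :=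
            add_le_add (mul_le_mul hq_le hr_close (abs_nonneg _) (by norm_num)) hq_close
        _ ≤ ε/2 := by linarith [hδε]
    exact mul_le_mul_of_nonneg_left hφ_close (pb_nonneg n j)
  have hGsum : ∑ j ∈ G, pb n j * |φ j - 1| ≤ ε/2 := by
    calc ∑ j ∈ G, pb n j * |φ j - 1| ≤ ∑ j ∈ G, pb n j * (ε/2) :=
          Finset.sum_le_sum hGbound
      _ = (∑ j ∈ G, pb n j) * (ε/2) := by rw [← Finset.sum_mul]
      _ ≤ 1 * (ε/2) := by
          refine mul_le_mul_of_nonneg_right ?_ (by positivity)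
          rw [← pb_sum n]
          exact Finset.sum_le_sum_of_subset_of_nonneg (Finset.filter_subset _ _)
            (fun j _ _ => pb_nonneg n j)
      _ = ε/2 := one_mul _
  have hBsum : ∑ j ∈ B, pb n j * |φ j - 1| < ε/2 := by
    have hd := hN₂ n hnN₂
    rw [Real.dist_eq, sub_zero] at hd
    calc ∑ j ∈ B, pb n j * |φ j - 1|
        ≤ Real.sqrt (6*π*((n:ℝ))⁻¹) * (2/(27*δ^2)) + 2/(9*δ^2) * ((n:ℝ))⁻¹ := hBbound
      _ ≤ |Real.sqrt (6*π*((n:ℝ))⁻¹) * (2/(27*δ^2)) + 2/(9*δ^2) * ((n:ℝ))⁻¹| := le_abs_self _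
      _ < ε/2 := hd
  calc |∑ j ∈ range (n + 1), pb n j * (φ j - 1)|
      ≤ ∑ j ∈ range (n + 1), pb n j * |φ j - 1| := habs
    _ = (∑ j ∈ G, pb n j * |φ j - 1|) + ∑ j ∈ B, pb n j * |φ j - 1| := hsplit
    _ < ε/2 + ε/2 := add_lt_add_of_le_of_lt hGsum hBsum
    _ = ε := by ring


lemma S_eq (n : ℕ) : Real.sqrt (6 * π * n) * u n / (3 * 6 ^ n)
    = ∑ j ∈ range (n + 1), pb n j * (Real.sqrt (6 * π * n) / 3 * w (n - j)) := by
  rw [u]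
  have hrefl : ∑ k ∈ range (n + 1), (n.choose k : ℝ) * (k.centralBinom : ℝ) * 2 ^ (n - k)
      = ∑ j ∈ range (n + 1),
          (n.choose (n - j) : ℝ) * ((n - j).centralBinom : ℝ) * 2 ^ (n - (n - j)) := by
    exact (Finset.sum_range_reflect
      (fun k => (n.choose k : ℝ) * (k.centralBinom : ℝ) * 2 ^ (n - k)) (n + 1)).symm
  rw [hrefl, Finset.mul_sum, Finset.sum_div]
  refine Finset.sum_congr rfl fun j hj => ?_
  rw [Finset.mem_range] at hj
  have hjle : j ≤ n := by omega
  obtain ⟨a, rfl⟩ : ∃ a, n = j + a := ⟨n - j, by omega⟩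
  have hch : (j + a).choose a = (j + a).choose j := by
    rw [add_comm j a]; exact Nat.choose_symm_add
  rw [Nat.add_sub_cancel_left, show j + a - a = j by omega, hch]
  rw [pb, w, pow_add]
  rw [show (6:ℝ)^j = 2^j*3^j by rw [← mul_pow]; norm_num,
    show (6:ℝ)^a = 2^a*3^a by rw [← mul_pow]; norm_num,
    show (4:ℝ)^a = 2^a*2^a by rw [← mul_pow]; norm_num]
  field_simp
  rw [show j + a - j = a by omega, div_pow, div_pow, one_pow]
  field_simp

theorem stmt_12 (b c : ℝ) (hc : 0 < c) (hb : b = 4 * Real.sqrt c) :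
    Tendsto (fun n : ℕ =>
        (T n b c / c ^ ((n : ℝ) / 2)) / (3 * 6 ^ n / Real.sqrt (6 * Real.pi * n)))
      atTop (nhds 1) := by
  subst hb
  have hs : 0 < Real.sqrt c := Real.sqrt_pos.mpr hc
  have hT : ∀ n : ℕ, T n (4 * Real.sqrt c) c / c ^ ((n : ℝ) / 2) = u n := by
    intro n
    rw [T_eq n c hc]
    have hcpow : c ^ ((n : ℝ) / 2) = (Real.sqrt c) ^ n := by
      rw [show ((n : ℝ) / 2) = (1/2 : ℝ) * n by ring, Real.rpow_mul hc.le,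
        Real.rpow_natCast, ← Real.sqrt_eq_rpow]
    rw [hcpow, u, mul_comm, mul_div_assoc,
      div_self (pow_ne_zero _ hs.ne'), mul_one]
  have key : Tendsto (fun n : ℕ => Real.sqrt (6 * π * n) * u n / (3 * 6 ^ n))
      atTop (𝓝 1) := by
    refine main_lim.congr fun n => ?_
    exact (S_eq n).symm
  refine key.congr fun n => ?_
  rw [hT n, div_div_eq_mul_div, mul_comm]
end

section
/- For b > 0 and c < 0, \limsup_{n\to\infty} |T_n(b,c)|^{1/n} \le \sqrt{b^2-4c}. -/
open Filter Polynomial Real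

lemma rootsfilter (N : ℕ) (hN : 0 < N) (ζ : ℂ) (hζ : IsPrimitiveRoot ζ N)
    (p : ℂ[X]) (hp : p.natDegree < N) (k : ℕ) (hk : k < N) (r : ℂ) :
    (N : ℂ) * (p.coeff k * r ^ k) =
      ∑ j ∈ Finset.range N, ζ ^ (j * (N - k)) * p.eval (r * ζ ^ j) := by
  have heval : ∀ x : ℂ, p.eval x = ∑ m ∈ Finset.range N, p.coeff m * x ^ m := by
    intro x
    exact (eval_eq_sum_range' hp x)
  symm
  calc ∑ j ∈ Finset.range N, ζ ^ (j * (N - k)) * p.eval (r * ζ ^ j)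
      = ∑ j ∈ Finset.range N, ∑ m ∈ Finset.range N,
          p.coeff m * r ^ m * (ζ ^ (N - k + m)) ^ j := by
        refine Finset.sum_congr rfl fun j _ => ?_
        rw [heval, Finset.mul_sum]
        refine Finset.sum_congr rfl fun m _ => ?_
        rw [mul_pow, ← pow_mul]
        have he : j * (N - k) + j * m = (N - k + m) * j := by ring
        calc ζ ^ (j * (N - k)) * (p.coeff m * (r ^ m * ζ ^ (j * m)))
            = p.coeff m * r ^ m * ζ ^ (j * (N - k) + j * m) := by
              rw [pow_add]; ring
          _ = p.coeff m * r ^ m * ζ ^ ((N - k + m) * j) := by rw [he]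
          _ = p.coeff m * r ^ m * (ζ ^ (N - k + m)) ^ j := by rw [pow_mul]
    _ = ∑ m ∈ Finset.range N, p.coeff m * r ^ m *
          ∑ j ∈ Finset.range N, (ζ ^ (N - k + m)) ^ j := by
        rw [Finset.sum_comm]
        simp [Finset.mul_sum]
    _ = (N : ℂ) * (p.coeff k * r ^ k) := by
        have hinner : ∀ m ∈ Finset.range N,
            ∑ j ∈ Finset.range N, (ζ ^ (N - k + m)) ^ j
              = if m = k then (N : ℂ) else 0 := by
          intro m hm
          rw [Finset.mem_range] at hm
          by_cases h : m = k
          · subst h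
            have hNk : N - m + m = N := Nat.sub_add_cancel hk.le
            rw [hNk, hζ.pow_eq_one]
            simp
          · rw [if_neg h]
            have hne : ζ ^ (N - k + m) ≠ 1 := by
              intro h1
              obtain ⟨t, ht⟩ := (hζ.pow_eq_one_iff_dvd _).mp h1
              have h2 : N - k + m < 2 * N := by omega
              have h3 : 0 < N - k + m := by omega
              rcases t with _ | _ | t
              · omega
              · simp at ht; omega
              · have h5 : 2 * N ≤ N * (t + 2) := by nlinarith
                linarith [ht ▸ h2]
            have hpow : (ζ ^ (N - k + m)) ^ N = 1 := by
              rw [← pow_mul, mul_comm, pow_mul, hζ.pow_eq_one, one_pow]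
            rw [geom_sum_eq hne, hpow]
            simp
        rw [Finset.sum_congr rfl (fun m hm => by rw [hinner m hm])]
        simp [Finset.sum_ite_eq', Finset.mem_range.mpr hk, mul_comm]

lemma evalbound (b c : ℝ) (hc : c < 0) (ω : ℂ) (hω : ‖ω‖ = 1) :
    ‖(Real.sqrt (-c) * ω) ^ 2 + b * (Real.sqrt (-c) * ω) + c‖
      ≤ Real.sqrt (-c) * Real.sqrt (b ^ 2 - 4 * c) := by
  set r : ℝ := Real.sqrt (-c) with hr
  have hr2 : r ^ 2 = -c := Real.sq_sqrt (by linarith)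
  have hr0 : 0 ≤ r := Real.sqrt_nonneg _
  set x := ω.re with hx
  set y := ω.im with hy
  have hxy : x ^ 2 + y ^ 2 = 1 := by
    have h := Complex.normSq_eq_norm_sq ω
    rw [hω] at h
    simp [Complex.normSq_apply] at h
    nlinarith [h]
  clear_value r
  have hc2 : c = -r ^ 2 := by linarith
  clear hr
  subst hc2
  rw [← Real.sqrt_mul_self (by positivity : (0:ℝ) ≤ r * Real.sqrt (b ^ 2 - 4 * -r ^ 2))]
  rw [Complex.norm_def]
  apply Real.sqrt_le_sqrt
  have hrs : r * Real.sqrt (b ^ 2 - 4 * -r ^ 2) * (r * Real.sqrt (b ^ 2 - 4 * -r ^ 2))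
      = r ^ 2 * (b ^ 2 + 4 * r ^ 2) := by
    have h1 : Real.sqrt (b ^ 2 - 4 * -r ^ 2) * Real.sqrt (b ^ 2 - 4 * -r ^ 2)
        = b ^ 2 - 4 * -r ^ 2 := Real.mul_self_sqrt (by nlinarith)
    nlinarith [h1]
  rw [hrs]
  have hre : (((r : ℂ) * ω) ^ 2 + b * ((r:ℂ) * ω) + (-r ^ 2 : ℝ)).re
      = r ^ 2 * (x ^ 2 - y ^ 2) + b * r * x + -r ^ 2 := by
    simp [Complex.add_re, Complex.mul_re, Complex.mul_im, pow_two]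
    ring
  have him : (((r : ℂ) * ω) ^ 2 + b * ((r:ℂ) * ω) + (-r ^ 2 : ℝ)).im
      = r ^ 2 * (2 * x * y) + b * r * y := by
    simp [Complex.add_im, Complex.mul_re, Complex.mul_im, pow_two]
    ring
  rw [Complex.normSq_apply, hre, him]
  have hE : (r ^ 2 * (x ^ 2 - y ^ 2) + b * r * x + -r ^ 2) * (r ^ 2 * (x ^ 2 - y ^ 2) + b * r * x + -r ^ 2)
      + (r ^ 2 * (2 * x * y) + b * r * y) * (r ^ 2 * (2 * x * y) + b * r * y)
      = b ^ 2 * r ^ 2 + 4 * r ^ 4 * y ^ 2 := by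
    linear_combination (r ^ 4 * (x ^ 2 + y ^ 2 - 1) + 2 * b * r ^ 3 * x + b ^ 2 * r ^ 2) * hxy
  rw [hE]
  have hy1 : y ^ 2 ≤ 1 := by nlinarith [sq_nonneg x]
  nlinarith [mul_nonneg (sq_nonneg (r ^ 2)) (sub_nonneg.mpr hy1)]

lemma Tbound (b c : ℝ) (hc : c < 0) (n : ℕ) :
    |T n b c| ≤ Real.sqrt (b ^ 2 - 4 * c) ^ n := by
  set s : ℝ := Real.sqrt (b ^ 2 - 4 * c) with hs
  set r : ℝ := Real.sqrt (-c) with hr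
  have hr0 : 0 < r := Real.sqrt_pos.mpr (by linarith)
  have hs0 : 0 ≤ s := Real.sqrt_nonneg _
  set p : ℂ[X] := (X ^ 2 + C (b:ℂ) * X + C (c:ℂ)) ^ n with hp
  have hTc : ((T n b c : ℝ) : ℂ) = p.coeff n := by
    have := Polynomial.coeff_map (algebraMap ℝ ℂ) (p := (X ^ 2 + C b * X + C c) ^ n) n
    simp only [Polynomial.map_pow, Polynomial.map_add, Polynomial.map_mul,
      Polynomial.map_X, Polynomial.map_C] at this
    rw [T, hp]
    simpa using this.symm
  set N : ℕ := 2 * n + 1 with hN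
  have hN0 : 0 < N := by omega
  set ζ : ℂ := Complex.exp (2 * Real.pi * Complex.I / N) with hζdef
  have hζ : IsPrimitiveRoot ζ N := Complex.isPrimitiveRoot_exp N (by omega)
  have hdeg : p.natDegree < N := by
    have h1 : (X ^ 2 + C (b:ℂ) * X + C (c:ℂ)).natDegree ≤ 2 := by
      compute_degree
    calc p.natDegree ≤ n * (X ^ 2 + C (b:ℂ) * X + C (c:ℂ)).natDegree :=
          natDegree_pow_le
      _ ≤ n * 2 := Nat.mul_le_mul_left n h1
      _ < N := by omega
  have key := rootsfilter N hN0 ζ hζ p hdeg n (by omega) (r : ℂ)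
  have habsζ : ∀ j : ℕ, ‖ζ ^ j‖ = 1 := by
    intro j
    rw [norm_pow]
    have : ‖ζ‖ = 1 := by
      rw [hζdef]
      rw [Complex.norm_exp]
      have : (2 * Real.pi * Complex.I / N).re = 0 := by
        simp [Complex.div_re]
      rw [this, Real.exp_zero]
    rw [this, one_pow]
  have heval : ∀ j : ℕ, ‖p.eval ((r : ℂ) * ζ ^ j)‖ ≤ (r * s) ^ n := by
    intro j
    rw [hp]
    simp only [eval_pow, eval_add, eval_mul, eval_C, eval_X, norm_pow]
    apply pow_le_pow_left₀ (norm_nonneg _)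
    have h := evalbound b c hc (ζ ^ j) (habsζ j)
    have he : ((r:ℂ) * ζ ^ j) ^ 2 + (c:ℂ) + (b:ℂ) * ((r:ℂ) * ζ ^ j)
        = ((r:ℂ) * ζ ^ j) ^ 2 + (b:ℂ) * ((r:ℂ) * ζ ^ j) + (c:ℂ) := by ring
    exact he ▸ h
  -- take abs of key
  have habs : (N : ℝ) * (‖p.coeff n‖ * r ^ n) ≤ (N : ℝ) * ((r * s) ^ n) := by
    have h1 : ‖(N : ℂ) * (p.coeff n * (r:ℂ) ^ n)‖
        = (N : ℝ) * (‖p.coeff n‖ * r ^ n) := by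
      simp [norm_mul, norm_pow, Complex.norm_real, Complex.norm_natCast,
        abs_of_nonneg hr0.le]
    have h2 : ‖∑ j ∈ Finset.range N, ζ ^ (j * (N - n)) * p.eval ((r:ℂ) * ζ ^ j)‖
        ≤ (N : ℝ) * ((r * s) ^ n) := by
      calc ‖∑ j ∈ Finset.range N, ζ ^ (j * (N - n)) * p.eval ((r:ℂ) * ζ ^ j)‖
          ≤ ∑ j ∈ Finset.range N, ‖ζ ^ (j * (N - n)) * p.eval ((r:ℂ) * ζ ^ j)‖ :=
            norm_sum_le _ _
        _ ≤ ∑ j ∈ Finset.range N, (r * s) ^ n := by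
            apply Finset.sum_le_sum
            intro j _
            rw [norm_mul, habsζ]
            rw [one_mul]
            exact heval j
        _ = (N : ℝ) * ((r * s) ^ n) := by
            rw [Finset.sum_const, Finset.card_range, nsmul_eq_mul]
    calc (N : ℝ) * (‖p.coeff n‖ * r ^ n)
        = ‖(N : ℂ) * (p.coeff n * (r:ℂ) ^ n)‖ := h1.symm
      _ = ‖∑ j ∈ Finset.range N, ζ ^ (j * (N - n)) * p.eval ((r:ℂ) * ζ ^ j)‖ := by
          rw [key]
      _ ≤ (N : ℝ) * ((r * s) ^ n) := h2
  have hcoeff : ‖p.coeff n‖ = |T n b c| := by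
    rw [← hTc, Complex.norm_real, Real.norm_eq_abs]
  rw [hcoeff] at habs
  have hNpos : (0:ℝ) < N := by positivity
  have h3 : |T n b c| * r ^ n ≤ (r * s) ^ n := by
    have := (mul_le_mul_iff_right₀ hNpos).mp habs
    linarith
  rw [mul_pow] at h3
  have hrn : (0:ℝ) < r ^ n := pow_pos hr0 n
  nlinarith [h3, hrn]

theorem stmt_14 (b c : ℝ) (hb : 0 < b) (hc : c < 0) :
    Filter.limsup (fun n : ℕ => |T n b c| ^ ((1 : ℝ) / n)) atTop ≤
      Real.sqrt (b ^ 2 - 4 * c) := by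
  set s : ℝ := Real.sqrt (b ^ 2 - 4 * c) with hs
  have hs0 : 0 ≤ s := Real.sqrt_nonneg _
  apply Filter.limsup_le_of_le
  · exact IsBoundedUnder.isCoboundedUnder_le
      (isBoundedUnder_of ⟨0, fun n => Real.rpow_nonneg (abs_nonneg _) _⟩)
  · filter_upwards [Filter.eventually_ge_atTop 1] with n hn
    have hT := Tbound b c hc n
    have hn0 : (n:ℝ) ≠ 0 := Nat.cast_ne_zero.mpr (by omega)
    calc |T n b c| ^ ((1:ℝ)/n) ≤ (s ^ n) ^ ((1:ℝ)/n) := by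
          apply Real.rpow_le_rpow (abs_nonneg _) hT (by positivity)
      _ = s := by
          rw [← Real.rpow_natCast s n, ← Real.rpow_mul hs0]
          rw [mul_one_div, div_self hn0, Real.rpow_one]
end
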